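/- Fix any identification type (torus, Klein bottle, or projective plane). For a path in IMC of length at most 2^m, let U be the first copy of V_m in its m-sequence. Then there exists a corner vertex x of U that is shared by every copy of V_m appearing in the m-sequence of the path. -/

import Mathlib

/-!
Magic carpets (Sierpinski carpet with torus / Klein bottle / projective plane
identifications of the sides of the vacant squares), following
"Analysis on the projective octagasket and other fractafolds" setup of the paper
"Magic carpets" (Goodman–Siu–Strichartz et al.).

Cells of the infinite blowup are indexed by their lower-left corners in `ℤ × ℤ`
(in units where every cell is a unit square).  A lattice square is a cell iff no
base-3 digit position carries the digit `1` in both coordinates simultaneously.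
The vacant square ("hole") of level `s` at block `(a, b)` is the middle ninth of
the level-`(s+1)` block with block coordinates `(a, b)`, i.e. the square
`[a·3^(s+1)+3^s, a·3^(s+1)+2·3^s) × [b·3^(s+1)+3^s, b·3^(s+1)+2·3^s)`; it is a
genuine vacant square of the carpet iff `(a,b)` itself satisfies the cell
condition.  Opposite sides of each vacant square are identified according to the
chosen identification type; orientation-reversal of a pair of sides reverses the
transverse coordinate.
-/

namespace MagicCarpet

/-- The three ways of identifying the two pairs of opposite sides of a vacant square:
torus (both pairs orientation preserved), Klein bottle (one pair preserved, one
reversed) and projective plane (both pairs reversed). -/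
inductive IdentType
  | torus
  | klein
  | proj
  deriving DecidableEq

/-- Whether crossing a vacant square horizontally (through its vertical pair of sides)
reverses the transverse (vertical) coordinate. -/
def flipH : IdentType → Bool
  | .torus => false
  | .klein => false
  | .proj => true

/-- Whether crossing a vacant square vertically (through its horizontal pair of sides)
reverses the transverse (horizontal) coordinate. -/
def flipV : IdentType → Bool
  | .torus => false
  | .klein => true
  | .proj => true

/-- An assignment of an identification type to every vacant square; the vacant square of
level `s` at block `(a, b)` receives the type `ι s a b`. -/
abbrev IdentAssignment := ℕ → ℤ → ℤ → IdentType

/-- The uniform assignment: the same identification type at every vacant square. -/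
def uniform (t : IdentType) : IdentAssignment := fun _ _ _ => t

/-- The base-3 digit of an integer at position `k` (floor division, so digits of
negative integers are eventually `2`). -/
def dig (k : ℕ) (n : ℤ) : ℤ := Int.emod (Int.ediv n (3 ^ k)) 3

/-- `p` is (the lower-left corner of) a cell of the infinite blowup of the Sierpinski
carpet iff no base-3 digit position carries the digit `1` in both coordinates. -/
def IsCell (p : ℤ × ℤ) : Prop := ∀ k : ℕ, ¬(dig k p.1 = 1 ∧ dig k p.2 = 1)

/-- The cells of the infinite magic carpet. -/
def Cell : Type := { p : ℤ × ℤ // IsCell p }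

/-- `p` and `q` are glued across the vacant square of level `s` at block `(a, b)`
horizontally: `p` is the cell immediately to the left of the vacant square, `q` the
corresponding cell immediately to its right (with the transverse coordinate reversed
when the identification of that pair of sides is orientation reversing). -/
def HoleAdjH (ι : IdentAssignment) (p q : ℤ × ℤ) : Prop :=
  ∃ (s : ℕ) (a b : ℤ), IsCell (a, b) ∧
    p.1 = a * 3 ^ (s + 1) + 3 ^ s - 1 ∧
    q.1 = a * 3 ^ (s + 1) + 2 * 3 ^ s ∧
    b * 3 ^ (s + 1) + 3 ^ s ≤ p.2 ∧ p.2 < b * 3 ^ (s + 1) + 2 * 3 ^ s ∧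
    q.2 = if flipH (ι s a b) then 2 * (b * 3 ^ (s + 1) + 3 ^ s) + 3 ^ s - 1 - p.2 else p.2

/-- Vertical analogue of `HoleAdjH`: `p` is immediately below the vacant square and `q`
immediately above it. -/
def HoleAdjV (ι : IdentAssignment) (p q : ℤ × ℤ) : Prop :=
  ∃ (s : ℕ) (a b : ℤ), IsCell (a, b) ∧
    p.2 = b * 3 ^ (s + 1) + 3 ^ s - 1 ∧
    q.2 = b * 3 ^ (s + 1) + 2 * 3 ^ s ∧
    a * 3 ^ (s + 1) + 3 ^ s ≤ p.1 ∧ p.1 < a * 3 ^ (s + 1) + 2 * 3 ^ s ∧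
    q.1 = if flipV (ι s a b) then 2 * (a * 3 ^ (s + 1) + 3 ^ s) + 3 ^ s - 1 - p.1 else p.1

/-- Two cells of the infinite magic carpet are adjacent iff they share an edge after
identification: either they share an edge in the plane, or they are glued together
across some vacant square. -/
def IMCAdj (ι : IdentAssignment) (p q : ℤ × ℤ) : Prop :=
  IsCell p ∧ IsCell q ∧ p ≠ q ∧
    (|p.1 - q.1| + |p.2 - q.2| = 1 ∨
      HoleAdjH ι p q ∨ HoleAdjH ι q p ∨ HoleAdjV ι p q ∨ HoleAdjV ι q p)

/-- The infinite magic carpet graph `IMC` determined by the identification assignment `ι`: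
vertices are the cells, two cells being adjacent exactly when they share an edge after
identification. -/
def IMC (ι : IdentAssignment) : SimpleGraph Cell where
  Adj p q := IMCAdj ι p.val q.val
  symm := by
    constructor
    rintro p q ⟨hp, hq, hne, hd⟩
    refine ⟨hq, hp, hne.symm, ?_⟩
    rcases hd with h | h | h | h | h
    · left
      rw [abs_sub_comm q.val.1 p.val.1, abs_sub_comm q.val.2 p.val.2]
      exact h
    · exact Or.inr (Or.inr (Or.inl h))
    · exact Or.inr (Or.inl h)
    · exact Or.inr (Or.inr (Or.inr (Or.inr h)))
    · exact Or.inr (Or.inr (Or.inr (Or.inl h)))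
  loopless := by
    constructor
    rintro p ⟨_, _, hne, _⟩
    exact hne rfl

/-- The ball `B(x, r)` of radius `r` around the cell `x`, in the geodesic graph metric
(the distance between two cells is the length of a shortest path of successively
adjacent cells joining them). -/
def ball (ι : IdentAssignment) (x : Cell) (r : ℕ) : Set Cell :=
  { y | (IMC ι).dist x y < r }

/-- The block coordinates of the copy of `V_m` containing the cell `p`. -/
def copyOf (m : ℕ) (p : Cell) : ℤ × ℤ :=
  (Int.ediv p.val.1 (3 ^ m), Int.ediv p.val.2 (3 ^ m))

/-- The cell `p` belongs to the copy of `V_m` with block coordinates `C`. -/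
def InCopy (m : ℕ) (C : ℤ × ℤ) (p : Cell) : Prop := copyOf m p = C

/-- The `3^m × 3^m` block with block coordinates `C` is a copy of `V_m` inside the
infinite magic carpet. -/
def IsCopy (C : ℤ × ℤ) : Prop := IsCell C

/-- `p` is one of the four corner cells of the copy of `V_m` at block `C`. -/
def IsCornerCell (m : ℕ) (C : ℤ × ℤ) (p : Cell) : Prop :=
  InCopy m C p ∧
    (p.val.1 = C.1 * 3 ^ m ∨ p.val.1 = (C.1 + 1) * 3 ^ m - 1) ∧
    (p.val.2 = C.2 * 3 ^ m ∨ p.val.2 = (C.2 + 1) * 3 ^ m - 1)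

/-- The sequence `R` with `R 0 = 0` and `R (m+1) = max (2·R m + 3) (2·R m + 2^m + 1)`. -/
def R : ℕ → ℕ
  | 0 => 0
  | m + 1 => max (2 * R m + 3) (2 * R m + 2 ^ m + 1)

/-- The four sides of a square block (or of a rectangular stack of blocks). -/
inductive Side
  | left
  | right
  | bottom
  | top
  deriving DecidableEq

/-- The opposite side. -/
def Side.opp : Side → Side
  | .left => .right
  | .right => .left
  | .bottom => .top
  | .top => .bottom

/-- The cell `p` lies in the copy of `V_m` at block `C`, along its side `d` (so one of the
edges of `p` lies on the corresponding `m`-edge of that copy). -/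
def OnSide (m : ℕ) (C : ℤ × ℤ) (d : Side) (p : Cell) : Prop :=
  InCopy m C p ∧
    match d with
    | .left => p.val.1 = C.1 * 3 ^ m
    | .right => p.val.1 = (C.1 + 1) * 3 ^ m - 1
    | .bottom => p.val.2 = C.2 * 3 ^ m
    | .top => p.val.2 = (C.2 + 1) * 3 ^ m - 1

/-- The column of cells with first coordinate `c` hits (has a cell whose edge lies on the
boundary of) the vacant square of level `s` whose horizontal block coordinate is `a`. -/
def ColumnHitsStitch (s : ℕ) (a : ℤ) (c : ℤ) : Prop :=
  a * 3 ^ (s + 1) + 3 ^ s - 1 ≤ c ∧ c ≤ a * 3 ^ (s + 1) + 2 * 3 ^ s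

/-- The vacant square of level `s` at block `(a, b)` lies in the interior of the copy of
`V_m` at block `C`. -/
def HoleInsideCopy (m : ℕ) (C : ℤ × ℤ) (s : ℕ) (a b : ℤ) : Prop :=
  C.1 * 3 ^ m ≤ a * 3 ^ (s + 1) ∧ (a + 1) * 3 ^ (s + 1) ≤ (C.1 + 1) * 3 ^ m ∧
  C.2 * 3 ^ m ≤ b * 3 ^ (s + 1) ∧ (b + 1) * 3 ^ (s + 1) ≤ (C.2 + 1) * 3 ^ m

/-- The copy of `V_m` at block `W` is glued just above the copy at block `V` (they are
vertical neighbours, intersecting along a horizontal `m`-edge): either the blocks are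
adjacent in the plane, or the top side of `V` and the bottom side of `W` are identified
sides of a vacant square of level `≥ m`.  The flag `f` records whether this gluing
reverses the horizontal coordinate. -/
def GluedVert (ι : IdentAssignment) (m : ℕ) (V W : ℤ × ℤ) (f : Bool) : Prop :=
  IsCell V ∧ IsCell W ∧
    ((W.1 = V.1 ∧ W.2 = V.2 + 1 ∧ f = false) ∨
      ∃ (s : ℕ) (a b : ℤ), m ≤ s ∧ IsCell (a, b) ∧
        (V.2 + 1) * 3 ^ m = b * 3 ^ (s + 1) + 3 ^ s ∧
        W.2 * 3 ^ m = b * 3 ^ (s + 1) + 2 * 3 ^ s ∧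
        a * 3 ^ (s + 1) + 3 ^ s ≤ V.1 * 3 ^ m ∧
        (V.1 + 1) * 3 ^ m ≤ a * 3 ^ (s + 1) + 2 * 3 ^ s ∧
        f = flipV (ι s a b) ∧
        (if f then W.1 * 3 ^ m = 2 * (a * 3 ^ (s + 1) + 3 ^ s) + 3 ^ s - (V.1 + 1) * 3 ^ m
          else W.1 = V.1))

/-- Horizontal analogue of `GluedVert`: `W` is glued just to the right of `V` (they are
horizontal neighbours, intersecting along a vertical `m`-edge). -/
def GluedHoriz (ι : IdentAssignment) (m : ℕ) (V W : ℤ × ℤ) (f : Bool) : Prop :=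
  IsCell V ∧ IsCell W ∧
    ((W.2 = V.2 ∧ W.1 = V.1 + 1 ∧ f = false) ∨
      ∃ (s : ℕ) (a b : ℤ), m ≤ s ∧ IsCell (a, b) ∧
        (V.1 + 1) * 3 ^ m = a * 3 ^ (s + 1) + 3 ^ s ∧
        W.1 * 3 ^ m = a * 3 ^ (s + 1) + 2 * 3 ^ s ∧
        b * 3 ^ (s + 1) + 3 ^ s ≤ V.2 * 3 ^ m ∧
        (V.2 + 1) * 3 ^ m ≤ b * 3 ^ (s + 1) + 2 * 3 ^ s ∧
        f = flipH (ι s a b) ∧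
        (if f then W.2 * 3 ^ m = 2 * (b * 3 ^ (s + 1) + 3 ^ s) + 3 ^ s - (V.2 + 1) * 3 ^ m
          else W.2 = V.2))

/-- An `m`-stack: a finite sequence of copies of `V_m`, consecutive copies being all
horizontal neighbours or all vertical neighbours.  Each copy carries a Boolean flag
recording its orientation relative to the first copy (so that the stack is isomorphic,
as a cell graph, to a rectangular stack of copies of `V_m`). -/
structure MStack (ι : IdentAssignment) (m : ℕ) where
  vert : Bool
  blocks : List ((ℤ × ℤ) × Bool)
  nonempty : blocks ≠ []
  copies : ∀ Bf ∈ blocks, IsCell Bf.1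
  head_flip : (blocks.head nonempty).2 = false
  chain : blocks.Chain' fun Vf Wf => ∃ g : Bool,
    (if vert then GluedVert ι m Vf.1 Wf.1 g else GluedHoriz ι m Vf.1 Wf.1 g) ∧
      Wf.2 = xor Vf.2 g

/-- The cell `p` lies in (one of the copies of `V_m` constituting) the `m`-stack `st`. -/
def MStack.MemCell {ι : IdentAssignment} {m : ℕ} (st : MStack ι m) (p : Cell) : Prop :=
  ∃ Bf ∈ st.blocks, copyOf m p = Bf.1

/-- The side `d` of the `3^m × 3^m` block `B`, as a set of points of the plane. -/
def blockSideSet (m : ℕ) (B : ℤ × ℤ) (d : Side) : Set (ℤ × ℤ) :=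
  match d with
  | .left => { p | p.1 = B.1 * 3 ^ m ∧ B.2 * 3 ^ m ≤ p.2 ∧ p.2 ≤ (B.2 + 1) * 3 ^ m }
  | .right => { p | p.1 = (B.1 + 1) * 3 ^ m ∧ B.2 * 3 ^ m ≤ p.2 ∧ p.2 ≤ (B.2 + 1) * 3 ^ m }
  | .bottom => { p | p.2 = B.2 * 3 ^ m ∧ B.1 * 3 ^ m ≤ p.1 ∧ p.1 ≤ (B.1 + 1) * 3 ^ m }
  | .top => { p | p.2 = (B.2 + 1) * 3 ^ m ∧ B.1 * 3 ^ m ≤ p.1 ∧ p.1 ≤ (B.1 + 1) * 3 ^ m }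

/-- The side `d` of the rectangular outer boundary of the `m`-stack `st`, as a set of
points of the plane (taking the recorded orientation flips into account). -/
def MStack.sideSet {ι : IdentAssignment} {m : ℕ} (st : MStack ι m) (d : Side) :
    Set (ℤ × ℤ) :=
  if st.vert then
    (match d with
    | .bottom => blockSideSet m (st.blocks.head st.nonempty).1 .bottom
    | .top => blockSideSet m (st.blocks.getLast st.nonempty).1 .top
    | .left =>
        { p | ∃ Bf ∈ st.blocks, p ∈ blockSideSet m Bf.1 (if Bf.2 then Side.right else Side.left) }
    | .right =>
        { p | ∃ Bf ∈ st.blocks, p ∈ blockSideSet m Bf.1 (if Bf.2 then Side.left else Side.right) })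
  else
    (match d with
    | .left => blockSideSet m (st.blocks.head st.nonempty).1 .left
    | .right => blockSideSet m (st.blocks.getLast st.nonempty).1 .right
    | .bottom =>
        { p | ∃ Bf ∈ st.blocks, p ∈ blockSideSet m Bf.1 (if Bf.2 then Side.top else Side.bottom) }
    | .top =>
        { p | ∃ Bf ∈ st.blocks, p ∈ blockSideSet m Bf.1 (if Bf.2 then Side.bottom else Side.top) })

/-- The side `d` of the unit cell with lower-left corner `c`, as a set of points. -/
def cellEdge (c : ℤ × ℤ) (d : Side) : Set (ℤ × ℤ) :=
  match d with
  | .left => { p | p.1 = c.1 ∧ c.2 ≤ p.2 ∧ p.2 ≤ c.2 + 1 }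
  | .right => { p | p.1 = c.1 + 1 ∧ c.2 ≤ p.2 ∧ p.2 ≤ c.2 + 1 }
  | .bottom => { p | p.2 = c.2 ∧ c.1 ≤ p.1 ∧ p.1 ≤ c.1 + 1 }
  | .top => { p | p.2 = c.2 + 1 ∧ c.1 ≤ p.1 ∧ p.1 ≤ c.1 + 1 }

/-- The cell `c` is on the set `S` (one of its four edges is contained in `S`). -/
def CellOnSet (c : Cell) (S : Set (ℤ × ℤ)) : Prop :=
  ∃ d : Side, cellEdge c.val d ⊆ S

/-- An axis-parallel segment of length `3^m` with `3^m`-aligned endpoints: if `vert` it is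
`{a·3^m} × [b·3^m, (b+1)·3^m]`, otherwise `[a·3^m, (a+1)·3^m] × {b·3^m}`.  (The `m`-edges
of the infinite magic carpet are such segments, taken up to identification.) -/
structure Seg where
  vert : Bool
  a : ℤ
  b : ℤ

/-- The set of points of the segment `e` (at scale `3^m`). -/
def Seg.pts (m : ℕ) (e : Seg) : Set (ℤ × ℤ) :=
  if e.vert then { p | p.1 = e.a * 3 ^ m ∧ e.b * 3 ^ m ≤ p.2 ∧ p.2 ≤ (e.b + 1) * 3 ^ m }
  else { p | p.2 = e.b * 3 ^ m ∧ e.a * 3 ^ m ≤ p.1 ∧ p.1 ≤ (e.a + 1) * 3 ^ m }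

/-- The segments `e` (on the left or bottom side of a vacant square of level `≥ m`) and
`e'` (the corresponding subsegment of the opposite side of that vacant square) are glued
by the identification of the sides of that vacant square. -/
def SegGlue (ι : IdentAssignment) (m : ℕ) (e e' : Seg) : Prop :=
  ∃ (s : ℕ) (a b : ℤ), m ≤ s ∧ IsCell (a, b) ∧
    ((e.vert = true ∧ e'.vert = true ∧
        e.a * 3 ^ m = a * 3 ^ (s + 1) + 3 ^ s ∧
        e'.a * 3 ^ m = a * 3 ^ (s + 1) + 2 * 3 ^ s ∧
        b * 3 ^ (s + 1) + 3 ^ s ≤ e.b * 3 ^ m ∧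
        (e.b + 1) * 3 ^ m ≤ b * 3 ^ (s + 1) + 2 * 3 ^ s ∧
        (if flipH (ι s a b) then
          e'.b * 3 ^ m = 2 * (b * 3 ^ (s + 1) + 3 ^ s) + 3 ^ s - (e.b + 1) * 3 ^ m
         else e'.b = e.b)) ∨
      (e.vert = false ∧ e'.vert = false ∧
        e.b * 3 ^ m = b * 3 ^ (s + 1) + 3 ^ s ∧
        e'.b * 3 ^ m = b * 3 ^ (s + 1) + 2 * 3 ^ s ∧
        a * 3 ^ (s + 1) + 3 ^ s ≤ e.a * 3 ^ m ∧
        (e.a + 1) * 3 ^ m ≤ a * 3 ^ (s + 1) + 2 * 3 ^ s ∧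
        (if flipV (ι s a b) then
          e'.a * 3 ^ m = 2 * (a * 3 ^ (s + 1) + 3 ^ s) + 3 ^ s - (e.a + 1) * 3 ^ m
         else e'.a = e.a)))

/-- Two segments represent the same `m`-edge of the infinite magic carpet iff they are
related by the equivalence generated by the gluings of the sides of the vacant squares. -/
def SegEquiv (ι : IdentAssignment) (m : ℕ) : Seg → Seg → Prop :=
  Relation.EqvGen fun e e' => SegGlue ι m e e' ∨ SegGlue ι m e' e

/-- The lattice points `p` (on the left or bottom side of a vacant square) and `q` (the
corresponding point of the opposite side) are glued by the identification of the sides of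
that vacant square. -/
def PtGlue (ι : IdentAssignment) (p q : ℤ × ℤ) : Prop :=
  ∃ (s : ℕ) (a b : ℤ), IsCell (a, b) ∧
    ((p.1 = a * 3 ^ (s + 1) + 3 ^ s ∧ q.1 = a * 3 ^ (s + 1) + 2 * 3 ^ s ∧
        b * 3 ^ (s + 1) + 3 ^ s ≤ p.2 ∧ p.2 ≤ b * 3 ^ (s + 1) + 2 * 3 ^ s ∧
        q.2 = if flipH (ι s a b) then 2 * (b * 3 ^ (s + 1) + 3 ^ s) + 3 ^ s - p.2 else p.2) ∨
      (p.2 = b * 3 ^ (s + 1) + 3 ^ s ∧ q.2 = b * 3 ^ (s + 1) + 2 * 3 ^ s ∧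
        a * 3 ^ (s + 1) + 3 ^ s ≤ p.1 ∧ p.1 ≤ a * 3 ^ (s + 1) + 2 * 3 ^ s ∧
        q.1 = if flipV (ι s a b) then 2 * (a * 3 ^ (s + 1) + 3 ^ s) + 3 ^ s - p.1 else p.1))

/-- Two lattice points represent the same vertex of the infinite magic carpet iff they
are related by the equivalence generated by the gluings of the sides of the vacant
squares. -/
def PtEquiv (ι : IdentAssignment) : ℤ × ℤ → ℤ × ℤ → Prop :=
  Relation.EqvGen fun p q => PtGlue ι p q ∨ PtGlue ι q p

/-- The segment forming the side `d` of the `3^m × 3^m` block `B`. -/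
def BlockSide (m : ℕ) (B : ℤ × ℤ) (d : Side) : Seg :=
  match d with
  | .left => ⟨true, B.1, B.2⟩
  | .right => ⟨true, B.1 + 1, B.2⟩
  | .bottom => ⟨false, B.1, B.2⟩
  | .top => ⟨false, B.1, B.2 + 1⟩

/-- The segment `e` represents the `m`-edge `E_{V,W}` along which the two distinct copies
`V` and `W` of `V_m` intersect after identification. -/
def IsEdgeBetween (ι : IdentAssignment) (m : ℕ) (V W : ℤ × ℤ) (e : Seg) : Prop :=
  V ≠ W ∧ IsCell V ∧ IsCell W ∧
    ∃ d d' : Side, SegEquiv ι m e (BlockSide m V d) ∧ SegEquiv ι m e (BlockSide m W d')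

/-- The `m`-edges represented by `e` and `e'` intersect (after identification). -/
def SegIntersect (ι : IdentAssignment) (m : ℕ) (e e' : Seg) : Prop :=
  ∃ (e₁ e₂ : Seg) (p q : ℤ × ℤ), SegEquiv ι m e e₁ ∧ SegEquiv ι m e' e₂ ∧
    p ∈ e₁.pts m ∧ q ∈ e₂.pts m ∧ PtEquiv ι p q

/-- The cell `c` is on the `m`-edge represented by `e` (one of its edges lies on the
`m`-edge, after identification). -/
def CellOnSeg (ι : IdentAssignment) (m : ℕ) (e : Seg) (c : Cell) : Prop :=
  ∃ e' : Seg, SegEquiv ι m e e' ∧ CellOnSet c (Seg.pts m e')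

/-- The `m`-edge represented by `e` lies (after identification) inside the point set `S`. -/
def SegOnSet (ι : IdentAssignment) (m : ℕ) (e : Seg) (S : Set (ℤ × ℤ)) : Prop :=
  ∃ e' : Seg, SegEquiv ι m e e' ∧ Seg.pts m e' ⊆ S

/-- The point `p` lies (after identification) on the `m`-edge represented by `e`. -/
def PtOnSeg (ι : IdentAssignment) (m : ℕ) (e : Seg) (p : ℤ × ℤ) : Prop :=
  ∃ (e' : Seg) (q : ℤ × ℤ), SegEquiv ι m e e' ∧ q ∈ Seg.pts m e' ∧ PtEquiv ι p q

/-- The `m`-sequence of a path: the copies of `V_m` containing its successive cells, with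
consecutive repetitions deleted. -/
def mSeq (ι : IdentAssignment) (m : ℕ) {x y : Cell} (w : (IMC ι).Walk x y) :
    List (ℤ × ℤ) :=
  (w.support.map (copyOf m)).destutter (· ≠ ·)

/-- `(i, V, W)` is an `m`-segment-of-two of the list `L`: `V` is the `i`-th entry of `L`,
`W` the `(i+1)`-st, and neither `V` nor `W` is the `(i-1)`-st entry (if it exists). -/
def IsSegTwo (L : List (ℤ × ℤ)) (i : ℕ) (V W : ℤ × ℤ) : Prop :=
  L[i]? = some V ∧ L[i + 1]? = some W ∧
    (i = 0 ∨ ∀ U, L[i - 1]? = some U → U ≠ V ∧ U ≠ W)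

/-- The path `w` enters the `m`-segment-of-two with copies `V, W` through the `m`-edge
represented by `e`: it has consecutive cells, both on that `m`-edge, of which only the
second lies in `V` or `W`. -/
def EntersThrough (ι : IdentAssignment) (m : ℕ) {x y : Cell} (w : (IMC ι).Walk x y)
    (V W : ℤ × ℤ) (e : Seg) : Prop :=
  ∃ (n : ℕ) (c c' : Cell), w.support[n]? = some c ∧ w.support[n + 1]? = some c' ∧
    CellOnSeg ι m e c ∧ CellOnSeg ι m e c' ∧
    copyOf m c ≠ V ∧ copyOf m c ≠ W ∧ (copyOf m c' = V ∨ copyOf m c' = W)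

/-- The path `w` exits the `m`-segment-of-two with copies `V, W` through the `m`-edge
represented by `e`: it has consecutive cells, both on that `m`-edge, of which only the
first lies in `V` or `W`. -/
def ExitsThrough (ι : IdentAssignment) (m : ℕ) {x y : Cell} (w : (IMC ι).Walk x y)
    (V W : ℤ × ℤ) (e : Seg) : Prop :=
  ∃ (n : ℕ) (c c' : Cell), w.support[n]? = some c ∧ w.support[n + 1]? = some c' ∧
    CellOnSeg ι m e c ∧ CellOnSeg ι m e c' ∧
    (copyOf m c = V ∨ copyOf m c = W) ∧ copyOf m c' ≠ V ∧ copyOf m c' ≠ W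

/-- `p` is the center of the `m`-segment-of-two `(i, V, W)` of the path `w`: the vertex at
which `E_{V,W}` and those of `Ent(i)`, `Exit(i)` that exist all intersect. -/
def IsCenter (ι : IdentAssignment) (m : ℕ) {x y : Cell} (w : (IMC ι).Walk x y) (i : ℕ)
    (V W : ℤ × ℤ) (p : ℤ × ℤ) : Prop :=
  IsSegTwo (mSeq ι m w) i V W ∧
    (∃ e : Seg, EntersThrough ι m w V W e ∨ ExitsThrough ι m w V W e) ∧
    (∃ evw : Seg, IsEdgeBetween ι m V W evw ∧ PtOnSeg ι m evw p) ∧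
    (∀ e : Seg, EntersThrough ι m w V W e → PtOnSeg ι m e p) ∧
    (∀ e : Seg, ExitsThrough ι m w V W e → PtOnSeg ι m e p)

/-- `p` is one of the four corner points of the copy of `V_m` at block `C`. -/
def IsCornerPt (m : ℕ) (C : ℤ × ℤ) (p : ℤ × ℤ) : Prop :=
  (p.1 = C.1 * 3 ^ m ∨ p.1 = (C.1 + 1) * 3 ^ m) ∧
  (p.2 = C.2 * 3 ^ m ∨ p.2 = (C.2 + 1) * 3 ^ m)

/-- The copies of `V_m` at blocks `C` and `D` share a corner vertex (after
identification). -/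
def SharesCornerVertex (ι : IdentAssignment) (m : ℕ) (C D : ℤ × ℤ) : Prop :=
  ∃ p q : ℤ × ℤ, IsCornerPt m C p ∧ IsCornerPt m D q ∧ PtEquiv ι p q

/-- Reduction of cell coordinates modulo the period lattice `3^m · ℤ²`. -/
def redMod (m : ℕ) (p : ℤ × ℤ) : ℤ × ℤ := (Int.emod p.1 (3 ^ m), Int.emod p.2 (3 ^ m))

/-- `p` lies in the fundamental domain `[0, 3^m) × [0, 3^m)`. -/
def InFund (m : ℕ) (p : ℤ × ℤ) : Prop := 0 ≤ p.1 ∧ p.1 < 3 ^ m ∧ 0 ≤ p.2 ∧ p.2 < 3 ^ m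

/-- Adjacency across the outer boundary of `MCT_m` (opposite sides of the outer square
identified with orientation preserved). -/
def WrapAdj (m : ℕ) (p q : ℤ × ℤ) : Prop :=
  (p.1 = 3 ^ m - 1 ∧ q.1 = 0 ∧ q.2 = p.2) ∨ (p.2 = 3 ^ m - 1 ∧ q.2 = 0 ∧ q.1 = p.1)

/-- The cell graph of `MCT_m`, the level-`m` magic carpet with torus identifications of
all inner vacant squares and of the outer boundary, on the cells of the fundamental
domain. -/
def MCTAdj (m : ℕ) (p q : ℤ × ℤ) : Prop :=
  InFund m p ∧ InFund m q ∧ IsCell p ∧ IsCell q ∧ p ≠ q ∧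
    (|p.1 - q.1| + |p.2 - q.2| = 1 ∨
      HoleAdjH (uniform .torus) p q ∨ HoleAdjH (uniform .torus) q p ∨
      HoleAdjV (uniform .torus) p q ∨ HoleAdjV (uniform .torus) q p ∨
      WrapAdj m p q ∨ WrapAdj m q p)

/-- Fueled version of the hole-metric potential. -/
def hAux : ℕ → ℕ → ℕ
  | 0, _ => 0
  | k+1, n => if n < 3^k then hAux k n else if n < 2*3^k then 2^k else 2^k + hAux k (n - 2*3^k)

lemma hAux_stable : ∀ k n, n < 3^k → hAux (k+1) n = hAux k n := by
  intro k n h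
  simp [hAux, h]

lemma hAux_stable' : ∀ j k n, k ≤ j → n < 3^k → hAux j n = hAux k n := by
  intro j
  induction j with
  | zero => intro k n hk _; interval_cases k; rfl
  | succ j ih =>
    intro k n hk hn
    rcases Nat.eq_or_lt_of_le hk with h | h
    · rw [h]
    · have hkj : k ≤ j := Nat.lt_succ_iff.mp h
      rw [hAux_stable j n (lt_of_lt_of_le hn (Nat.pow_le_pow_right (by norm_num) hkj))]
      exact ih k n hkj hn

/-- The hole-metric potential on `ℕ`. -/
def hpot (n : ℕ) : ℕ := hAux (n+1) n

lemma n_lt_pow3 (n : ℕ) : n < 3^(n+1) := by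
  calc n < 2^n := Nat.lt_two_pow_self
  _ ≤ 3^(n+1) := le_trans (Nat.pow_le_pow_left (by norm_num) _) (Nat.pow_le_pow_right (by norm_num) (by omega))

lemma hpot_eq_hAux (k n : ℕ) (h : n < 3^k) : hpot n = hAux k n := by
  rcases le_total k (n+1) with hk | hk
  · exact hAux_stable' (n+1) k n hk h
  · exact (hAux_stable' k (n+1) n hk (n_lt_pow3 n)).symm

@[simp] lemma hpot_zero : hpot 0 = 0 := rfl

lemma hpot_block1 (k n : ℕ) (h1 : 3^k ≤ n) (h2 : n < 2*3^k) : hpot n = 2^k := by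
  have h3 : (3:ℕ)^(k+1) = 3*3^k := by ring
  rw [hpot_eq_hAux (k+1) n (by omega)]
  simp [hAux, Nat.not_lt.mpr h1, h2]

lemma hpot_block2 (k n : ℕ) (h1 : 2*3^k ≤ n) (h2 : n < 3^(k+1)) :
    hpot n = 2^k + hpot (n - 2*3^k) := by
  have h3' : (3:ℕ)^(k+1) = 3*3^k := by ring
  have hp : 0 < (3:ℕ)^k := Nat.pow_pos (by norm_num)
  have h3 : ¬ n < 3^k := by omega
  have h4 : n - 2*3^k < 3^k := by omega
  rw [hpot_eq_hAux (k+1) n h2]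
  simp only [hAux, h3, if_false, Nat.not_lt.mpr h1, if_false]
  rw [← hpot_eq_hAux k _ h4]

lemma hpot_pow (k : ℕ) : hpot (3^k) = 2^k := by
  have hp : 0 < (3:ℕ)^k := Nat.pow_pos (by norm_num)
  exact hpot_block1 k _ le_rfl (by omega)

lemma hpot_pred_pow (k : ℕ) : hpot (3^k - 1) = 2^k - 1 := by
  induction k with
  | zero => simp
  | succ k ih =>
    have h3 : (3:ℕ)^(k+1) = 3*3^k := by ring
    have hp : 0 < (3:ℕ)^k := Nat.pow_pos (by norm_num)
    have h2p : 0 < (2:ℕ)^k := Nat.pow_pos (by norm_num)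
    have h2 : (2:ℕ)^(k+1) = 2*2^k := by ring
    have hstep : hpot (3^(k+1) - 1) = 2^k + hpot (3^(k+1) - 1 - 2*3^k) := by
      apply hpot_block2 <;> omega
    rw [hstep, show 3^(k+1) - 1 - 2*3^k = 3^k - 1 by omega, ih]
    omega

lemma hpot_lt (k : ℕ) : ∀ n, n < 3^k → hpot n < 2^k := by
  induction k with
  | zero => intro n h; interval_cases n; simp
  | succ k ih =>
    intro n h
    have h3 : (3:ℕ)^(k+1) = 3*3^k := by ring
    have h2 : (2:ℕ)^(k+1) = 2*2^k := by ring
    rcases Nat.lt_or_ge n (3^k) with h1 | h1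
    · have := ih n h1; omega
    · rcases Nat.lt_or_ge n (2*3^k) with h2' | h2'
      · rw [hpot_block1 k n h1 h2']
        have : 0 < (2:ℕ)^k := Nat.pow_pos (by norm_num)
        omega
      · rw [hpot_block2 k n h2' h]
        have := ih (n - 2*3^k) (by omega)
        omega

/-- `hpot` increases by 0 or 1 at each step. -/
lemma hpot_step : ∀ n, hpot n ≤ hpot (n+1) ∧ hpot (n+1) ≤ hpot n + 1 := by
  suffices H : ∀ k n, n + 1 < 3^(k+1) → hpot n ≤ hpot (n+1) ∧ hpot (n+1) ≤ hpot n + 1 by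
    intro n
    exact H (n+1) n (n_lt_pow3 (n+1))
  intro k
  induction k with
  | zero =>
    intro n h
    have hn3 : n + 1 < 3 := by simpa using h
    have : n = 0 ∨ n = 1 := by omega
    rcases this with rfl | rfl
    · simp [show hpot 1 = 1 from hpot_block1 0 1 (by norm_num) (by norm_num)]
    · rw [show hpot 1 = 1 from hpot_block1 0 1 (by norm_num) (by norm_num),
        show hpot 2 = 1 + hpot 0 from hpot_block2 0 2 (by norm_num) (by norm_num)]
      simp
  | succ k ih =>
    intro n h
    have h3 : (3:ℕ)^(k+2) = 3*3^(k+1) := by ring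
    have h3' : (3:ℕ)^(k+1) = 3*3^k := by ring
    have hp : 0 < (3:ℕ)^k := Nat.pow_pos (by norm_num)
    have h2 : (2:ℕ)^(k+1) = 2*2^k := by ring
    have h2p : 0 < (2:ℕ)^k := Nat.pow_pos (by norm_num)
    rcases Nat.lt_or_ge (n+1) (3^(k+1)) with h1 | h1
    · exact ih n h1
    rcases Nat.eq_or_lt_of_le h1 with h1' | h1'
    · have hn : n = 3^(k+1) - 1 := by omega
      rw [hn, hpot_pred_pow, show 3^(k+1) - 1 + 1 = 3^(k+1) by omega, hpot_pow]
      omega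
    · rcases Nat.lt_or_ge (n+1) (2*3^(k+1)) with hb | hb
      · have hn1 : 3^(k+1) ≤ n := by omega
        rw [hpot_block1 (k+1) n hn1 (by omega), hpot_block1 (k+1) (n+1) (by omega) hb]
        omega
      rcases Nat.eq_or_lt_of_le hb with hb' | hb'
      · have hn : 3^(k+1) ≤ n ∧ n < 2*3^(k+1) := by omega
        rw [hpot_block1 (k+1) n hn.1 hn.2, hpot_block2 (k+1) (n+1) (by omega) (by omega),
          show n + 1 - 2*3^(k+1) = 0 by omega]
        simp
      · rw [hpot_block2 (k+1) n (by omega) (by omega),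
          hpot_block2 (k+1) (n+1) (by omega) h,
          show n + 1 - 2*3^(k+1) = (n - 2*3^(k+1)) + 1 by omega]
        have := ih (n - 2*3^(k+1)) (by omega)
        omega

lemma hpot_mono : Monotone hpot :=
  monotone_nat_of_le_succ (fun n => (hpot_step n).1)

lemma hpot_le_succ (n : ℕ) : hpot (n+1) ≤ hpot n + 1 := (hpot_step n).2

lemma hpot_lipschitz {a b : ℕ} (h : a ≤ b) : hpot b ≤ hpot a + (b - a) := by
  induction b with
  | zero =>
    have : a = 0 := by omega
    subst this; simp
  | succ b ih =>
    rcases Nat.eq_or_lt_of_le h with h' | h'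
    · subst h'; omega
    · have h1 := ih (by omega)
      have h2 := hpot_le_succ b
      omega

lemma hpot_ge_pow {m n : ℕ} (h : 3^m ≤ n) : 2^m ≤ hpot n := by
  calc 2^m = hpot (3^m) := (hpot_pow m).symm
  _ ≤ hpot n := hpot_mono h

/-- The key span inequality: `hpot` increases by at most 1 across any hole span. -/
lemma hpot_span (s a : ℕ) : hpot (a*3^(s+1) + 2*3^s) ≤ hpot (a*3^(s+1) + 3^s - 1) + 1 := by
  induction a using Nat.strong_induction_on with
  | _ a ih =>
  have hp3 : 0 < (3:ℕ)^s := Nat.pow_pos (by norm_num)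
  have h31 : (3:ℕ)^(s+1) = 3*3^s := by ring
  have h2p : 0 < (2:ℕ)^s := Nat.pow_pos (by norm_num)
  rcases Nat.eq_zero_or_pos a with rfl | ha
  · simp only [Nat.zero_mul, Nat.zero_add]
    rw [hpot_pred_pow, hpot_block2 s (2*3^s) le_rfl (by omega)]
    simp only [Nat.sub_self, hpot_zero]
    omega
  · obtain ⟨A, hA⟩ : ∃ A : ℕ, A = a*3^(s+1) := ⟨_, rfl⟩
    rw [← hA]
    have hApos : 0 < A := by rw [hA]; positivity
    obtain ⟨K, hK⟩ : ∃ K, K = Nat.log 3 A := ⟨_, rfl⟩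
    have hK1 : 3^K ≤ A := hK ▸ Nat.pow_log_le_self 3 (by omega)
    have hK2 : A < 3^(K+1) := hK ▸ Nat.lt_pow_succ_log_self (by norm_num) A
    have hsA : 3^(s+1) ≤ A := by
      rw [hA]
      calc (3:ℕ)^(s+1) = 1*3^(s+1) := (one_mul _).symm
      _ ≤ a*3^(s+1) := Nat.mul_le_mul_right _ ha
    have hsK : s + 1 ≤ K := by
      have h1 : (3:ℕ)^(s+1) < 3^(K+1) := lt_of_le_of_lt hsA hK2
      have := (Nat.pow_lt_pow_iff_right (show 1<3 by norm_num)).mp h1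
      omega
    have hdvd : 3^(s+1) ∣ A := hA ▸ Dvd.intro_left a rfl
    have hdvdK : (3:ℕ)^(s+1) ∣ 3^K := pow_dvd_pow 3 hsK
    have hK3 : (3:ℕ)^(K+1) = 3*3^K := by ring
    have hKbig : 3^(s+1) ≤ (3:ℕ)^K := Nat.pow_le_pow_right (by norm_num) hsK
    rcases Nat.lt_or_ge A (2*3^K) with hmid | htop
    · have hA2 : A + 3^(s+1) ≤ 2*3^K := by
        have hdvd2 : 3^(s+1) ∣ 2*3^K := Dvd.dvd.mul_left hdvdK 2
        obtain ⟨u, hu⟩ := hdvd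
        obtain ⟨v, hv⟩ := hdvd2
        have huv : u < v := by
          rcases Nat.lt_or_ge u v with h | h
          · exact h
          · exfalso
            have : 3^(s+1) * v ≤ 3^(s+1) * u := Nat.mul_le_mul_left _ h
            omega
        have : 3^(s+1) * (u+1) ≤ 3^(s+1) * v := Nat.mul_le_mul_left _ huv
        have he : 3^(s+1) * (u+1) = 3^(s+1)*u + 3^(s+1) := by ring
        omega
      rw [hpot_block1 K (A + 2*3^s) (by omega) (by omega),
        hpot_block1 K (A + 3^s - 1) (by omega) (by omega)]
      omega
    · have hb2 : A + 2*3^s < 3^(K+1) := by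
        have hdvd2 : (3:ℕ)^(s+1) ∣ 3^(K+1) := pow_dvd_pow 3 (by omega)
        obtain ⟨u, hu⟩ := hdvd
        obtain ⟨v, hv⟩ := hdvd2
        have huv : u < v := by
          rcases Nat.lt_or_ge u v with h | h
          · exact h
          · exfalso
            have : 3^(s+1) * v ≤ 3^(s+1) * u := Nat.mul_le_mul_left _ h
            omega
        have : 3^(s+1) * (u+1) ≤ 3^(s+1) * v := Nat.mul_le_mul_left _ huv
        have he : 3^(s+1) * (u+1) = 3^(s+1)*u + 3^(s+1) := by ring
        omega
      have hbA : hpot (A + 2*3^s) = 2^K + hpot (A + 2*3^s - 2*3^K) :=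
        hpot_block2 K _ (by omega) hb2
      have hbB : hpot (A + 3^s - 1) = 2^K + hpot (A + 3^s - 1 - 2*3^K) :=
        hpot_block2 K _ (by omega) (by omega)
      rw [hbA, hbB]
      obtain ⟨w, hw⟩ : (3:ℕ)^(s+1) ∣ (A - 2*3^K) := Nat.dvd_sub hdvd (Dvd.dvd.mul_left hdvdK 2)
      have hwa : w < a := by
        have h1 : 3^(s+1)*w + 2*3^K = A := by omega
        rw [hA, mul_comm a (3^(s+1))] at h1
        have h0 : 0 < 2*3^K := by positivity
        have h2 : 3^(s+1)*w < 3^(s+1)*a := by omega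
        exact Nat.lt_of_mul_lt_mul_left h2
      have hres := ih w hwa
      rw [mul_comm w ((3:ℕ)^(s+1))] at hres
      have e1 : A + 3 ^ s - 1 - 2 * 3 ^ K = 3^(s+1)*w + 3 ^ s - 1 := by omega
      have e2 : A + 2 * 3 ^ s - 2 * 3 ^ K = 3^(s+1)*w + 2 * 3 ^ s := by omega
      rw [e1, e2]
      omega


/-- Variation of `hpot` on the closed span of a hole is at most 1. -/
lemma hpot_span_pts {s A x y : ℕ} (hA : 3^(s+1) ∣ A)
    (hx1 : A + 3^s - 1 ≤ x) (hx2 : x ≤ A + 2*3^s)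
    (hy1 : A + 3^s - 1 ≤ y) (hy2 : y ≤ A + 2*3^s) :
    hpot y ≤ hpot x + 1 := by
  obtain ⟨a, rfl⟩ := hA
  rw [mul_comm] at *
  calc hpot y ≤ hpot (a*3^(s+1) + 2*3^s) := hpot_mono hy2
  _ ≤ hpot (a*3^(s+1) + 3^s - 1) + 1 := hpot_span s a
  _ ≤ hpot x + 1 := by have := hpot_mono hx1; omega

/-- One step of the developed walk in one axis: a move by at most 1, or a move
within the closed span of a hole of level `< m`. -/
def XStep (m : ℕ) (u v : ℤ) : Prop :=
  (u - v).natAbs ≤ 1 ∨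
  ∃ s : ℕ, ∃ a : ℤ, s < m ∧
    (a*3^(s+1) + 3^s - 1 ≤ u ∧ u ≤ a*3^(s+1) + 2*3^s ∧
     a*3^(s+1) + 3^s - 1 ≤ v ∧ v ≤ a*3^(s+1) + 2*3^s)

lemma XStep.symm {m : ℕ} {u v : ℤ} (h : XStep m u v) : XStep m v u := by
  rcases h with h | ⟨s, a, hs, h⟩
  · left; omega
  · right; exact ⟨s, a, hs, by tauto⟩

lemma XStep_translate {m : ℕ} {u v t : ℤ} (ht : (3^m : ℤ) ∣ t) (h : XStep m u v) :
    XStep m (u + t) (v + t) := by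
  rcases h with h | ⟨s, a, hs, h⟩
  · left; omega
  · right
    obtain ⟨c, hc⟩ : (3^(s+1) : ℤ) ∣ t := dvd_trans (pow_dvd_pow 3 hs) ht
    refine ⟨s, a + c, hs, ?_⟩
    have he : (a + c)*3^(s+1) = a*3^(s+1) + t := by rw [hc]; ring
    omega

lemma XStep_mirror {m : ℕ} {u v C : ℤ} (hC : (3^m : ℤ) ∣ (C+1)) (h : XStep m u v) :
    XStep m (C - u) (C - v) := by
  rcases h with h | ⟨s, a, hs, h⟩
  · left; omega
  · right
    obtain ⟨c, hc⟩ : (3^(s+1) : ℤ) ∣ (C+1) := dvd_trans (pow_dvd_pow 3 hs) hC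
    refine ⟨s, c - a - 1, hs, ?_⟩
    have he : (c - a - 1)*3^(s+1) = (C+1) - a*3^(s+1) - 3^(s+1) := by rw [hc]; ring
    have h3 : (3:ℤ)^(s+1) = 3*3^s := by ring
    omega

/-- Potential measuring progress to the right of the vertical line `X`. -/
noncomputable def Pup (X n : ℤ) : ℕ := hpot (n - X).toNat

/-- Potential measuring progress to the left of the position `X - 1`. -/
noncomputable def Pdown (X n : ℤ) : ℕ := hpot (X - 1 - n).toNat

lemma Pup_lip0 {m : ℕ} {u v : ℤ} (h : XStep m u v) : Pup 0 v ≤ Pup 0 u + 1 := by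
  unfold Pup
  simp only [sub_zero]
  rcases h with h | ⟨s, a, hs, h⟩
  · have h1 : v.toNat ≤ u.toNat + 1 := by omega
    calc hpot v.toNat ≤ hpot (u.toNat + 1) := hpot_mono h1
    _ ≤ hpot u.toNat + 1 := hpot_le_succ _
  · have h3 : (3:ℤ)^(s+1) = 3*3^s := by ring
    have h3p : (0:ℤ) < 3^s := pow_pos (by norm_num) s
    rcases le_or_gt 0 a with ha | ha
    · lift a to ℕ using ha with k hk
      have c1 : ((k*3^(s+1) : ℕ) : ℤ) = (k:ℤ)*3^(s+1) := by push_cast; ring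
      have c2 : ((3^s : ℕ) : ℤ) = (3:ℤ)^s := by push_cast; ring
      have hN3 : (1:ℕ) ≤ 3^s := Nat.one_le_pow _ _ (by norm_num)
      have hu : u.toNat ≥ k*3^(s+1) + 3^s - 1 ∧ u.toNat ≤ k*3^(s+1) + 2*3^s := by
        constructor <;> omega
      have hv : v.toNat ≥ k*3^(s+1) + 3^s - 1 ∧ v.toNat ≤ k*3^(s+1) + 2*3^s := by
        constructor <;> omega
      exact hpot_span_pts (Dvd.intro k (mul_comm _ _)) hu.1 hu.2 hv.1 hv.2
    · -- a ≤ -1 : the whole span is negative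
      have ha' : a ≤ -1 := by omega
      have hA : a*3^(s+1) ≤ -3^(s+1) := by nlinarith [pow_pos (show (0:ℤ)<3 by norm_num) (s+1)]
      have hu0 : u < 0 := by omega
      have hv0 : v < 0 := by omega
      have e1 : u.toNat = 0 := by omega
      have e2 : v.toNat = 0 := by omega
      rw [e1, e2]
      omega

lemma Pup_lip {m : ℕ} {X u v : ℤ} (hX : (3^m : ℤ) ∣ X) (h : XStep m u v) :
    Pup X v ≤ Pup X u + 1 := by
  have h' : XStep m (u + (-X)) (v + (-X)) := XStep_translate (by simpa using hX.neg_right) h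
  have := Pup_lip0 h'
  unfold Pup at *
  simp only [sub_zero] at this
  convert this using 3 <;> ring_nf

lemma Pdown_lip {m : ℕ} {X u v : ℤ} (hX : (3^m : ℤ) ∣ X) (h : XStep m u v) :
    Pdown X v ≤ Pdown X u + 1 := by
  have h' : XStep m ((X-1) - u) ((X-1) - v) := XStep_mirror (by simpa using hX) h
  have := Pup_lip0 h'
  unfold Pup at this
  unfold Pdown
  simp only [sub_zero] at this
  exact this

/-- Points within the span of a hole of level `s < m` have the same `3^m`-column. -/
lemma XStep_col {m : ℕ} {u v : ℤ} (h : XStep m u v) {X : ℤ} (hX : (3^m : ℤ) ∣ X)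
    (huv : u < X ∧ X ≤ v ∨ v < X ∧ X ≤ u) : (u - v).natAbs ≤ 1 := by
  rcases h with h | ⟨s, a, hs, h⟩
  · exact h
  · exfalso
    have h3 : (3:ℤ)^(s+1) = 3*3^s := by ring
    have h3p : (0:ℤ) < 3^s := pow_pos (by norm_num) s
    -- X strictly between A and A + 3^(s+1), but 3^(s+1) ∣ X - A
    obtain ⟨c, hc⟩ : (3^(s+1) : ℤ) ∣ (X - a*3^(s+1)) := by
      have : (3^(s+1):ℤ) ∣ X := dvd_trans (pow_dvd_pow 3 hs) hX
      exact dvd_sub this ⟨a, by ring⟩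
    have hlow : 0 < X - a*3^(s+1) := by omega
    have hhigh : X - a*3^(s+1) < 3^(s+1) := by omega
    rw [hc] at hlow hhigh
    have hcp : 0 < c := by
      rcases le_or_gt c 0 with h0 | h0
      · exfalso
        have : (3:ℤ)^(s+1) * c ≤ 0 := mul_nonpos_of_nonneg_of_nonpos (by positivity) h0
        omega
      · exact h0
    have h1 : (3:ℤ)^(s+1) ≤ 3^(s+1)*c := le_mul_of_one_le_right (by positivity) (by omega)
    omega


section OneD

open Classical

variable {m T : ℕ} {n : ℕ → ℤ}

lemma pot_diff_up {X : ℤ} (hX : (3^m : ℤ) ∣ X)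
    (hstep : ∀ t, t < T → XStep m (n t) (n (t+1))) {t1 t2 : ℕ}
    (h12 : t1 ≤ t2) (h2 : t2 ≤ T) : Pup X (n t2) ≤ Pup X (n t1) + (t2 - t1) := by
  induction t2 with
  | zero =>
    have h0 : t1 = 0 := by omega
    rw [h0]
    omega
  | succ t2 ih =>
    rcases Nat.eq_or_lt_of_le h12 with h | h
    · rw [h]
      omega
    · have hlip := Pup_lip hX (hstep t2 (by omega))
      have := ih (by omega) (by omega)
      omega

lemma pot_diff_down {X : ℤ} (hX : (3^m : ℤ) ∣ X)
    (hstep : ∀ t, t < T → XStep m (n t) (n (t+1))) {t1 t2 : ℕ}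
    (h12 : t1 ≤ t2) (h2 : t2 ≤ T) : Pdown X (n t2) ≤ Pdown X (n t1) + (t2 - t1) := by
  induction t2 with
  | zero =>
    have h0 : t1 = 0 := by omega
    rw [h0]
    omega
  | succ t2 ih =>
    rcases Nat.eq_or_lt_of_le h12 with h | h
    · rw [h]
      omega
    · have hlip := Pdown_lip hX (hstep t2 (by omega))
      have := ih (by omega) (by omega)
      omega

/-- First crossing, upwards: exact landing on the line. -/
lemma cross_up {X : ℤ} (hX : (3^m : ℤ) ∣ X)
    (hstep : ∀ t, t < T → XStep m (n t) (n (t+1)))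
    (h0 : n 0 < X) {t1 : ℕ} (ht1 : t1 ≤ T) (hv : X ≤ n t1) :
    ∃ τ, 1 ≤ τ ∧ τ ≤ t1 ∧ n τ = X ∧ ∀ t, t < τ → n t < X := by
  have hex : ∃ t, X ≤ n t := ⟨t1, hv⟩
  set τ := Nat.find hex with hτ
  have hτspec : X ≤ n τ := Nat.find_spec hex
  have hτmin : ∀ t, t < τ → n t < X := fun t ht => by
    have := Nat.find_min hex ht; omega
  have hτ1 : 1 ≤ τ := by
    rcases Nat.eq_zero_or_pos τ with h | h
    · exfalso; rw [h] at hτspec; omega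
    · exact h
  have hτle : τ ≤ t1 := Nat.find_min' hex hv
  refine ⟨τ, hτ1, hτle, ?_, hτmin⟩
  have hprev : n (τ - 1) < X := hτmin _ (by omega)
  have hstep' : XStep m (n (τ-1)) (n τ) := by
    have : τ - 1 + 1 = τ := by omega
    have h := hstep (τ-1) (by omega)
    rwa [this] at h
  have := XStep_col hstep' hX (Or.inl ⟨hprev, hτspec⟩)
  omega

/-- First crossing, downwards: exact landing just below the line. -/
lemma cross_down {X : ℤ} (hX : (3^m : ℤ) ∣ X)
    (hstep : ∀ t, t < T → XStep m (n t) (n (t+1)))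
    (h0 : X ≤ n 0) {t1 : ℕ} (ht1 : t1 ≤ T) (hv : n t1 < X) :
    ∃ τ, 1 ≤ τ ∧ τ ≤ t1 ∧ n τ = X - 1 ∧ ∀ t, t < τ → X ≤ n t := by
  have hex : ∃ t, n t < X := ⟨t1, hv⟩
  set τ := Nat.find hex with hτ
  have hτspec : n τ < X := Nat.find_spec hex
  have hτmin : ∀ t, t < τ → X ≤ n t := fun t ht => by
    have := Nat.find_min hex ht; omega
  have hτ1 : 1 ≤ τ := by
    rcases Nat.eq_zero_or_pos τ with h | h
    · exfalso; rw [h] at hτspec; omega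
    · exact h
  have hτle : τ ≤ t1 := Nat.find_min' hex hv
  refine ⟨τ, hτ1, hτle, ?_, hτmin⟩
  have hprev : X ≤ n (τ - 1) := hτmin _ (by omega)
  have hstep' : XStep m (n (τ-1)) (n τ) := by
    have : τ - 1 + 1 = τ := by omega
    have h := hstep (τ-1) (by omega)
    rwa [this] at h
  have := XStep_col hstep' hX (Or.inr ⟨hτspec, hprev⟩)
  omega

/-- The 1D confinement lemma: a short developed walk stays within two adjacent columns. -/
lemma oneD (hstep : ∀ t, t < T → XStep m (n t) (n (t+1))) (hT : T ≤ 2^m)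
    {X0 : ℤ} (hX0 : X0 = 3^m * ((n 0) / 3^m)) :
    (∀ t ≤ T, X0 - 3^m ≤ n t ∧ n t < X0 + 3^m) ∨
    (∀ t ≤ T, X0 ≤ n t ∧ n t < X0 + 2*3^m) := by
  have h3p : (0:ℤ) < 3^m := pow_pos (by norm_num) m
  have hc3 : ((3^m : ℕ) : ℤ) = (3^m : ℤ) := by push_cast; ring
  have h2p : (0:ℕ) < 2^m := Nat.pow_pos (by norm_num)
  have hX0dvd : (3^m : ℤ) ∣ X0 := ⟨_, hX0⟩
  have hX1dvd : (3^m : ℤ) ∣ (X0 + 3^m) := by exact dvd_add hX0dvd dvd_rfl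
  have hn0 : X0 ≤ n 0 ∧ n 0 < X0 + 3^m := by
    have h := Int.mul_ediv_add_emod (n 0) (3^m)
    have h1 := Int.emod_nonneg (n 0) (show (3^m:ℤ) ≠ 0 by positivity)
    have h2 := Int.emod_lt_of_pos (n 0) h3p
    omega
  -- key values of the potentials
  have hPup_at_line : ∀ X : ℤ, ∀ u : ℤ, u = X → Pup X u = 0 := by
    intro X u hu
    unfold Pup
    rw [hu]
    simp [hpot_zero]
  have hPdown_at_line : ∀ X u : ℤ, u = X - 1 → Pdown X u = 0 := by
    intro X u hu
    unfold Pdown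
    rw [hu]
    simp [hpot_zero]
  have hPup_far : ∀ X u : ℤ, X + 3^m ≤ u → 2^m ≤ Pup X u := by
    intro X u hu
    unfold Pup
    apply hpot_ge_pow
    omega
  have hPdown_far : ∀ X u : ℤ, u ≤ X - 3^m - 1 → 2^m ≤ Pdown X u := by
    intro X u hu
    unfold Pdown
    apply hpot_ge_pow
    omega
  -- no point two columns to the right
  have hR2 : ∀ t ≤ T, n t < X0 + 2*3^m := by
    by_contra hc
    push_neg at hc
    obtain ⟨tb, htb, hvb⟩ := hc
    obtain ⟨τ, hτ1, hτle, hτeq, -⟩ :=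
      cross_up hX1dvd hstep (by omega) (le_trans htb le_rfl) (by omega)
    have hd := pot_diff_up hX1dvd hstep (le_trans hτle (le_refl tb)) htb
    rw [hPup_at_line _ _ hτeq] at hd
    have := hPup_far (X0 + 3^m) (n tb) (by omega)
    omega
  -- no point two columns to the left
  have hL2 : ∀ t ≤ T, X0 - 3^m ≤ n t := by
    by_contra hc
    push_neg at hc
    obtain ⟨tb, htb, hvb⟩ := hc
    obtain ⟨τ, hτ1, hτle, hτeq, -⟩ :=
      cross_down hX0dvd hstep (by omega) htb (by omega)
    have hd := pot_diff_down hX0dvd hstep hτle htb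
    rw [hPdown_at_line _ _ hτeq] at hd
    have := hPdown_far X0 (n tb) (by omega)
    omega
  -- not both sides
  by_cases hR : ∃ t ≤ T, X0 + 3^m ≤ n t
  · right
    intro t ht
    refine ⟨?_, hR2 t ht⟩
    by_contra hc
    push_neg at hc
    obtain ⟨ta, hta, hva⟩ := hR
    obtain ⟨τR, hτR1, hτRle, hτReq, hτRmin⟩ := cross_up hX1dvd hstep (by omega) hta hva
    obtain ⟨τL, hτL1, hτLle, hτLeq, hτLmin⟩ := cross_down hX0dvd hstep (by omega) ht (by omega)
    have hRT : τR ≤ T := le_trans hτRle hta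
    have hLT : τL ≤ T := le_trans hτLle ht
    rcases lt_trichotomy τL τR with hLR | hLR | hLR
    · have hd := pot_diff_up hX0dvd hstep (le_of_lt hLR) hRT
      have e1 : Pup X0 (n τL) = 0 := by
        unfold Pup
        rw [hτLeq]
        have : (X0 - 1 - X0).toNat = 0 := by omega
        simp [hpot_zero, show (X0 - 1 - X0).toNat = 0 by omega]
      have e2 : 2^m ≤ Pup X0 (n τR) := by
        unfold Pup
        rw [hτReq]
        apply hpot_ge_pow
        omega
      omega
    · rw [hLR] at hτLeq
      rw [hτReq] at hτLeq
      omega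
    · have hd := pot_diff_down hX1dvd hstep (le_of_lt hLR) hLT
      have e1 : Pdown (X0 + 3^m) (n τR) = 0 := by
        unfold Pdown
        rw [hτReq]
        simp [hpot_zero, show (X0 + 3^m - 1 - (X0 + 3^m)).toNat = 0 by omega]
      have e2 : 2^m ≤ Pdown (X0 + 3^m) (n τL) := by
        unfold Pdown
        rw [hτLeq]
        apply hpot_ge_pow
        omega
      omega
  · left
    push_neg at hR
    intro t ht
    exact ⟨hL2 t ht, by have := hR t ht; omega⟩

end OneD

/-- Helper: compute an integer Euclidean quotient. -/
lemma int_ediv_eq {B q r u : ℤ} (hB : 0 < B) (hu : u = B*q + r) (h0 : 0 ≤ r) (h1 : r < B) :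
    u / B = q :=
  ((Int.ediv_emod_unique hB).mpr ⟨by omega, h0, h1⟩).1

lemma int_ediv_bounds {B u : ℤ} (hB : 0 < B) : B * (u / B) ≤ u ∧ u < B * (u / B) + B := by
  have h := Int.mul_ediv_add_emod u B
  have h1 := Int.emod_nonneg u (by omega : B ≠ 0)
  have h2 := Int.emod_lt_of_pos u hB
  omega

/-- One axis of a development state: a direction-preserving or reversing affine map
whose translation part is suitably congruent mod `3^m`. -/
structure AState (m : ℕ) where
  e : Bool
  t : ℤ
  hdvd : (3^m : ℤ) ∣ (if e then t + 1 else t)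

variable {m : ℕ}

lemma bool_fcases : ∀ b : Bool, b = false ∨ b = true := by decide

/-- Action on cells. -/
def acell (S : AState m) (u : ℤ) : ℤ := if S.e then S.t - u else u + S.t

/-- Inverse action on lattice points. -/
def aptInv (S : AState m) (X : ℤ) : ℤ := if S.e then S.t + 1 - X else X - S.t

/-- The identity axis state. -/
def aid (m : ℕ) : AState m := ⟨false, 0, by simp⟩

@[simp] lemma acell_aid (u : ℤ) : acell (aid m) u = u := by simp [acell, aid]
@[simp] lemma aptInv_aid (X : ℤ) : aptInv (aid m) X = X := by simp [aptInv, aid]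

lemma AState.dvd_false (S : AState m) (h : S.e = false) : (3^m : ℤ) ∣ S.t := by
  have := S.hdvd; rw [h] at this; simpa using this

lemma AState.dvd_true (S : AState m) (h : S.e = true) : (3^m : ℤ) ∣ (S.t + 1) := by
  have := S.hdvd; rw [h] at this; simpa using this

lemma acell_false (S : AState m) (h : S.e = false) (u : ℤ) : acell S u = u + S.t := by
  unfold acell; rw [h]; simp

lemma acell_true (S : AState m) (h : S.e = true) (u : ℤ) : acell S u = S.t - u := by
  unfold acell; rw [h]; simp

lemma aptInv_false (S : AState m) (h : S.e = false) (X : ℤ) : aptInv S X = X - S.t := by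
  unfold aptInv; rw [h]; simp

lemma aptInv_true (S : AState m) (h : S.e = true) (X : ℤ) : aptInv S X = S.t + 1 - X := by
  unfold aptInv; rw [h]; simp

lemma acell_natAbs (S : AState m) (u v : ℤ) :
    (acell S u - acell S v).natAbs = (u - v).natAbs := by
  rcases bool_fcases S.e with h | h
  · rw [acell_false S h, acell_false S h]; omega
  · rw [acell_true S h, acell_true S h]; omega

lemma acell_xstep (S : AState m) {u v : ℤ} (h : XStep m u v) :
    XStep m (acell S u) (acell S v) := by
  rcases bool_fcases S.e with hSe | hSe
  · rw [acell_false S hSe, acell_false S hSe]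
    exact XStep_translate (S.dvd_false hSe) h
  · rw [acell_true S hSe, acell_true S hSe]
    simpa using XStep_mirror (C := S.t) (S.dvd_true hSe) h

/-- `X` is one of the two corner lines of the `3^m`-block containing `u`. -/
def CornerLine (m : ℕ) (u X : ℤ) : Prop :=
  X = 3^m * (u / 3^m) ∨ X = 3^m * (u / 3^m) + 3^m

lemma corner_pull (S : AState m) (u : ℤ) {X : ℤ} (h : CornerLine m (acell S u) X) :
    CornerLine m u (aptInv S X) := by
  have h3 : (0:ℤ) < 3^m := pow_pos (by norm_num) m
  obtain ⟨hq1, hq2⟩ := int_ediv_bounds (u := u) h3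
  unfold CornerLine at *
  rcases bool_fcases S.e with hSe | hSe
  · rw [acell_false S hSe] at h
    rw [aptInv_false S hSe]
    obtain ⟨c, hc⟩ := S.dvd_false hSe
    have he : (u + S.t) / 3^m = u / 3^m + c :=
      int_ediv_eq h3 (r := u - 3^m*(u/3^m)) (by rw [hc]; ring) (by omega) (by omega)
    rw [he] at h
    have r1 : (3:ℤ)^m * (u/3^m + c) = 3^m*(u/3^m) + 3^m*c := by ring
    rcases h with h | h
    · left; omega
    · right; omega
  · rw [acell_true S hSe] at h
    rw [aptInv_true S hSe]
    obtain ⟨c, hc⟩ := S.dvd_true hSe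
    have he : (S.t - u) / 3^m = c - 1 - u / 3^m := by
      apply int_ediv_eq h3 (r := 3^m - 1 - (u - 3^m*(u/3^m))) _ (by omega) (by omega)
      have : (3:ℤ)^m * (c - 1 - u/3^m) = (3^m*c) - 3^m - 3^m*(u/3^m) := by ring
      omega
    rw [he] at h
    have r1 : (3:ℤ)^m * (c - 1 - u/3^m) = 3^m*c - 3^m - 3^m*(u/3^m) := by ring
    rcases h with h | h
    · right; omega
    · left; omega

/-- Precompose the cell action with subtraction of `δ` (used for crossing a hole). -/
def atrans (S : AState m) (δ : ℤ) (hδ : (3^m : ℤ) ∣ δ) : AState m :=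
  ⟨S.e, if S.e then S.t + δ else S.t - δ, by
    rcases bool_fcases S.e with hSe | hSe <;> rw [hSe] <;> simp only [if_true, if_false, Bool.false_eq_true]
    · exact dvd_sub (S.dvd_false hSe) hδ
    · have := dvd_add (S.dvd_true hSe) hδ
      convert this using 1
      · rfl
      · ring⟩

@[simp] lemma atrans_e (S : AState m) (δ : ℤ) (hδ) : (atrans S δ hδ).e = S.e := rfl
@[simp] lemma atrans_t (S : AState m) (δ : ℤ) (hδ) :
    (atrans S δ hδ).t = if S.e then S.t + δ else S.t - δ := rfl

lemma acell_atrans (S : AState m) (δ : ℤ) (hδ) (u : ℤ) :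
    acell (atrans S δ hδ) u = acell S (u - δ) := by
  rcases bool_fcases S.e with hSe | hSe
  · rw [acell_false _ (by rw [atrans_e]; exact hSe), acell_false S hSe, atrans_t, hSe]
    simp
    ring
  · rw [acell_true _ (by rw [atrans_e]; exact hSe), acell_true S hSe, atrans_t, hSe]
    simp
    ring

lemma aptInv_atrans (S : AState m) (δ : ℤ) (hδ) (X : ℤ) :
    aptInv (atrans S δ hδ) X = aptInv S X + δ := by
  rcases bool_fcases S.e with hSe | hSe
  · rw [aptInv_false _ (by rw [atrans_e]; exact hSe), aptInv_false S hSe, atrans_t, hSe]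
    simp
    ring
  · rw [aptInv_true _ (by rw [atrans_e]; exact hSe), aptInv_true S hSe, atrans_t, hSe]
    simp
    ring

/-- Precompose the cell action with the reflection `K - ·`. -/
def arefl (S : AState m) (K : ℤ) (hK : (3^m : ℤ) ∣ (K+1)) : AState m :=
  ⟨!S.e, if S.e then S.t - K else S.t + K, by
    rcases bool_fcases S.e with hSe | hSe <;> rw [hSe] <;>
      simp only [if_true, if_false, Bool.not_true, Bool.not_false, Bool.false_eq_true]
    · have := dvd_add (S.dvd_false hSe) hK
      convert this using 1
      · rfl
      · ring
    · have := dvd_sub (S.dvd_true hSe) hK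
      convert this using 1
      · rfl
      · ring⟩

@[simp] lemma arefl_e (S : AState m) (K : ℤ) (hK) : (arefl S K hK).e = !S.e := rfl
@[simp] lemma arefl_t (S : AState m) (K : ℤ) (hK) :
    (arefl S K hK).t = if S.e then S.t - K else S.t + K := rfl

lemma acell_arefl (S : AState m) (K : ℤ) (hK) (u : ℤ) :
    acell (arefl S K hK) u = acell S (K - u) := by
  rcases bool_fcases S.e with hSe | hSe
  · rw [acell_true _ (by rw [arefl_e, hSe]; rfl), acell_false S hSe, arefl_t, hSe]
    simp
    ring
  · rw [acell_false _ (by rw [arefl_e, hSe]; rfl), acell_true S hSe, arefl_t, hSe]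
    simp
    ring

lemma aptInv_arefl (S : AState m) (K : ℤ) (hK) (X : ℤ) :
    aptInv (arefl S K hK) X = (K + 1) - aptInv S X := by
  rcases bool_fcases S.e with hSe | hSe
  · rw [aptInv_true _ (by rw [arefl_e, hSe]; rfl), aptInv_false S hSe, arefl_t, hSe]
    simp
    ring
  · rw [aptInv_false _ (by rw [arefl_e, hSe]; rfl), aptInv_true S hSe, arefl_t, hSe]
    simp
    ring

/-- Crossing a `3^m`-line `W`: the two developed cells sit on either side of a developed
line `Λ`, the only common corner line, and `Λ` pulls back to `W`. -/
lemma axis_cross (S : AState m) {W : ℤ} (hW : (3^m:ℤ) ∣ W) :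
    ∃ Λ : ℤ, (3^m:ℤ) ∣ Λ ∧ aptInv S Λ = W ∧
      (∀ X, CornerLine m (acell S (W-1)) X → CornerLine m (acell S W) X → X = Λ) := by
  have h3 : (0:ℤ) < 3^m := pow_pos (by norm_num) m
  obtain ⟨wq, hwq⟩ := hW
  rcases bool_fcases S.e with hSe | hSe
  · obtain ⟨c, hc⟩ := S.dvd_false hSe
    refine ⟨W + S.t, dvd_add ⟨wq, hwq⟩ ⟨c, hc⟩, ?_, ?_⟩
    · rw [aptInv_false S hSe]; ring
    · intro X h1 h2
      rw [acell_false S hSe] at h1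
      rw [acell_false S hSe] at h2
      have e1 : (W - 1 + S.t) / 3^m = wq + c - 1 :=
        int_ediv_eq h3 (r := 3^m - 1) (by rw [hwq, hc]; ring) (by omega) (by omega)
      have e2 : (W + S.t) / 3^m = wq + c :=
        int_ediv_eq h3 (r := 0) (by rw [hwq, hc]; ring) (by omega) (by omega)
      unfold CornerLine at h1 h2
      rw [e1] at h1; rw [e2] at h2
      have r1 : (3:ℤ)^m*(wq+c-1) = 3^m*(wq+c) - 3^m := by ring
      have r2 : W + S.t = 3^m*(wq+c) := by rw [hwq, hc]; ring
      omega
  · obtain ⟨c, hc⟩ := S.dvd_true hSe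
    refine ⟨S.t + 1 - W, dvd_sub ⟨c, hc⟩ ⟨wq, hwq⟩, ?_, ?_⟩
    · rw [aptInv_true S hSe]; ring
    · intro X h1 h2
      rw [acell_true S hSe] at h1
      rw [acell_true S hSe] at h2
      have e1 : (S.t - (W - 1)) / 3^m = c - wq := by
        apply int_ediv_eq h3 (r := 0) _ (by omega) (by omega)
        have : (3:ℤ)^m*(c - wq) = 3^m*c - 3^m*wq := by ring
        omega
      have e2 : (S.t - W) / 3^m = c - wq - 1 := by
        apply int_ediv_eq h3 (r := 3^m - 1) _ (by omega) (by omega)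
        have : (3:ℤ)^m*(c - wq - 1) = 3^m*c - 3^m*wq - 3^m := by ring
        omega
      unfold CornerLine at h1 h2
      rw [e1] at h1; rw [e2] at h2
      have r1 : (3:ℤ)^m*(c-wq-1) = 3^m*(c-wq) - 3^m := by ring
      have r2 : S.t + 1 - W = 3^m*(c-wq) := by
        have : (3:ℤ)^m*(c - wq) = 3^m*c - 3^m*wq := by ring
        omega
      omega

/-- A `3^m`-aligned bound below implies a bound on the block line. -/
lemma line_le {W u : ℤ} (hdv : (3^m:ℤ) ∣ W) (h : W ≤ u) : W ≤ 3^m*(u/3^m) := by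
  have h3 : (0:ℤ) < 3^m := pow_pos (by norm_num) m
  obtain ⟨w, hw⟩ := hdv
  have : w ≤ u / 3^m := (Int.le_ediv_iff_mul_le h3).mpr (by rw [mul_comm]; omega)
  calc W = 3^m * w := hw
  _ ≤ 3^m*(u/3^m) := by exact mul_le_mul_of_nonneg_left this (by positivity)

lemma lt_line {V u : ℤ} (hdv : (3^m:ℤ) ∣ V) (h : u < V) : 3^m*(u/3^m) + 3^m ≤ V := by
  have h3 : (0:ℤ) < 3^m := pow_pos (by norm_num) m
  obtain ⟨v, hv⟩ := hdv
  have h1 : u / 3^m < v := by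
    rw [Int.ediv_lt_iff_lt_mul h3]
    rw [mul_comm]; omega
  have h2 : u / 3^m + 1 ≤ v := h1
  calc 3^m*(u/3^m) + 3^m = 3^m * (u/3^m + 1) := by ring
  _ ≤ 3^m * v := mul_le_mul_of_nonneg_left h2 (by positivity)
  _ = V := hv.symm



/-! ### Two-axis development states -/

/-- A two-axis development state. -/
structure DState (m : ℕ) where
  x : AState m
  y : AState m

/-- The per-step property of the development of a walk: both developed coordinates move
by an `XStep`, and either the state is unchanged, or every common developed corner pulls
back to a pair of glued points. -/
def StepP (ι : IdentAssignment) (m : ℕ) (S S' : DState m) (c c' : ℤ × ℤ) : Prop :=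
  XStep m (acell S.x c.1) (acell S'.x c'.1) ∧
  XStep m (acell S.y c.2) (acell S'.y c'.2) ∧
  (S' = S ∨ ∀ P : ℤ × ℤ,
    CornerLine m (acell S.x c.1) P.1 → CornerLine m (acell S.y c.2) P.2 →
    CornerLine m (acell S'.x c'.1) P.1 → CornerLine m (acell S'.y c'.2) P.2 →
    PtGlue ι (aptInv S.x P.1, aptInv S.y P.2) (aptInv S'.x P.1, aptInv S'.y P.2) ∨
    PtGlue ι (aptInv S'.x P.1, aptInv S'.y P.2) (aptInv S.x P.1, aptInv S.y P.2))

section StepExists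

variable {ι : IdentAssignment} {m : ℕ}

lemma pow3_dvd {s : ℕ} (hs : m ≤ s) : (3^m : ℤ) ∣ (3^s : ℤ) := pow_dvd_pow 3 hs

lemma dvd_left_line {s : ℕ} (hs : m ≤ s) (a : ℤ) : (3^m : ℤ) ∣ (a*3^(s+1) + 3^s) := by
  have h : a*3^(s+1) + 3^s = 3^s * (3*a+1) := by ring
  rw [h]
  exact Dvd.dvd.mul_right (pow3_dvd hs) _

lemma dvd_right_line {s : ℕ} (hs : m ≤ s) (a : ℤ) : (3^m : ℤ) ∣ (a*3^(s+1) + 2*3^s) := by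
  have h : a*3^(s+1) + 2*3^s = 3^s * (3*a+2) := by ring
  rw [h]
  exact Dvd.dvd.mul_right (pow3_dvd hs) _

lemma dvd_refl_const {s : ℕ} (hs : m ≤ s) (b : ℤ) :
    (3^m : ℤ) ∣ ((2*(b*3^(s+1) + 3^s) + 3^s - 1) + 1) := by
  have h : (2*(b*3^(s+1) + 3^s) + 3^s - 1) + 1 = 3^(s+1) * (2*b+1) := by ring
  rw [h]
  exact Dvd.dvd.mul_right (pow3_dvd (le_trans hs (Nat.le_succ s))) _

/-- Every adjacency of the infinite magic carpet can be developed. -/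
lemma step_exists (S : DState m) {c c' : ℤ × ℤ} (hadj : IMCAdj ι c c') :
    ∃ S', StepP ι m S S' c c' := by
  have h3s : (3:ℤ)^(0+1) = 3*3^0 := by norm_num
  obtain ⟨-, -, -, hd⟩ := hadj
  rcases hd with h | h | h | h | h
  · -- plane step
    refine ⟨S, ?_, ?_, Or.inl rfl⟩ <;>
    · left
      rw [acell_natAbs]
      have e1 := Int.abs_eq_natAbs (c.1 - c'.1)
      have e2 := Int.abs_eq_natAbs (c.2 - c'.2)
      omega
  · -- HoleAdjH c c' (forward crossing, to the right)
    obtain ⟨s, a, b, hcell, h1, h2, h3, h4, h5⟩ := h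
    have h3s : (3:ℤ)^(s+1) = 3*3^s := by ring
    have h3p : (0:ℤ) < 3^s := pow_pos (by norm_num) s
    rcases lt_or_ge s m with hsm | hsm
    · -- small hole: no state change
      refine ⟨S, ?_, ?_, Or.inl rfl⟩
      · exact acell_xstep _ (Or.inr ⟨s, a, hsm, by omega, by omega, by omega, by omega⟩)
      · apply acell_xstep
        by_cases hf : flipH (ι s a b) = true
        · rw [if_pos hf] at h5
          exact Or.inr ⟨s, b, hsm, by omega, by omega, by omega, by omega⟩
        · rw [if_neg hf] at h5
          exact Or.inl (by omega)
    · -- big hole: state update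
      have hδ : (3^m : ℤ) ∣ (3^s : ℤ) := pow3_dvd hsm
      have hWdvd : (3^m : ℤ) ∣ (a*3^(s+1) + 3^s) := dvd_left_line hsm a
      have hKdvd : (3^m : ℤ) ∣ ((2*(b*3^(s+1) + 3^s) + 3^s - 1) + 1) := dvd_refl_const hsm b
      have hc'x : c'.1 - 3^s = a*3^(s+1) + 3^s := by omega
      obtain ⟨Λ, hΛdvd, hΛinv, hΛuniq⟩ := axis_cross S.x hWdvd
      have hxdev : acell (atrans S.x (3^s) hδ) c'.1 = acell S.x (a*3^(s+1) + 3^s) := by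
        rw [acell_atrans, hc'x]
      have hxstep : XStep m (acell S.x c.1) (acell (atrans S.x (3^s) hδ) c'.1) := by
        left
        rw [hxdev, acell_natAbs]
        omega
      have hyr1 : b*3^(s+1) + 3^s ≤ 3^m*(c.2/3^m) := line_le (dvd_left_line hsm b) h3
      have hyr2 : 3^m*(c.2/3^m) + 3^m ≤ b*3^(s+1) + 2*3^s := lt_line (dvd_right_line hsm b) h4
      by_cases hf : flipH (ι s a b) = true
      · rw [if_pos hf] at h5
        refine ⟨⟨atrans S.x (3^s) hδ, arefl S.y (2*(b*3^(s+1) + 3^s) + 3^s - 1) hKdvd⟩,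
          hxstep, ?_, Or.inr ?_⟩
        · left
          show (acell S.y c.2 - acell (arefl S.y (2*(b*3^(s+1) + 3^s) + 3^s - 1) hKdvd) c'.2).natAbs ≤ 1
          rw [acell_arefl, show 2*(b*3^(s+1) + 3^s) + 3^s - 1 - c'.2 = c.2 by omega,
            acell_natAbs]
          omega
        · intro P hP1 hP2 hP1' hP2'
          left
          rw [show (⟨atrans S.x (3^s) hδ, arefl S.y (2*(b*3^(s+1) + 3^s) + 3^s - 1) hKdvd⟩ : DState m).x
              = atrans S.x (3^s) hδ from rfl, hxdev] at hP1'
          rw [h1] at hP1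
          have hPΛ : P.1 = Λ := hΛuniq P.1 hP1 hP1'
          have hYq := corner_pull S.y c.2 hP2
          unfold CornerLine at hYq
          refine ⟨s, a, b, hcell, Or.inl ⟨?_, ?_, ?_, ?_, ?_⟩⟩
          · show aptInv S.x P.1 = _
            rw [hPΛ, hΛinv]
          · show aptInv (atrans S.x (3^s) hδ) P.1 = _
            rw [aptInv_atrans, hPΛ, hΛinv]
            ring
          · show b * 3 ^ (s + 1) + 3 ^ s ≤ aptInv S.y P.2
            rcases hYq with hYq | hYq <;> omega
          · show aptInv S.y P.2 ≤ b * 3 ^ (s + 1) + 2 * 3 ^ s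
            rcases hYq with hYq | hYq <;> omega
          · show aptInv (arefl S.y (2*(b*3^(s+1) + 3^s) + 3^s - 1) hKdvd) P.2 = _
            rw [if_pos hf, aptInv_arefl]
            ring
      · rw [if_neg hf] at h5
        refine ⟨⟨atrans S.x (3^s) hδ, S.y⟩, hxstep, ?_, Or.inr ?_⟩
        · left
          show (acell S.y c.2 - acell S.y c'.2).natAbs ≤ 1
          rw [acell_natAbs]
          omega
        · intro P hP1 hP2 hP1' hP2'
          left
          rw [show (⟨atrans S.x (3^s) hδ, S.y⟩ : DState m).x = atrans S.x (3^s) hδ from rfl,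
            hxdev] at hP1'
          rw [h1] at hP1
          have hPΛ : P.1 = Λ := hΛuniq P.1 hP1 hP1'
          have hYq := corner_pull S.y c.2 hP2
          unfold CornerLine at hYq
          refine ⟨s, a, b, hcell, Or.inl ⟨?_, ?_, ?_, ?_, ?_⟩⟩
          · show aptInv S.x P.1 = _
            rw [hPΛ, hΛinv]
          · show aptInv (atrans S.x (3^s) hδ) P.1 = _
            rw [aptInv_atrans, hPΛ, hΛinv]
            ring
          · show b * 3 ^ (s + 1) + 3 ^ s ≤ aptInv S.y P.2
            rcases hYq with hYq | hYq <;> omega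
          · show aptInv S.y P.2 ≤ b * 3 ^ (s + 1) + 2 * 3 ^ s
            rcases hYq with hYq | hYq <;> omega
          · show aptInv S.y P.2 = _
            rw [if_neg hf]
  · -- HoleAdjH c' c (backward crossing, to the left)
    obtain ⟨s, a, b, hcell, h1, h2, h3, h4, h5⟩ := h
    have h3s : (3:ℤ)^(s+1) = 3*3^s := by ring
    have h3p : (0:ℤ) < 3^s := pow_pos (by norm_num) s
    rcases lt_or_ge s m with hsm | hsm
    · refine ⟨S, ?_, ?_, Or.inl rfl⟩
      · exact acell_xstep _ (Or.inr ⟨s, a, hsm, by omega, by omega, by omega, by omega⟩)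
      · apply acell_xstep
        by_cases hf : flipH (ι s a b) = true
        · rw [if_pos hf] at h5
          exact Or.inr ⟨s, b, hsm, by omega, by omega, by omega, by omega⟩
        · rw [if_neg hf] at h5
          exact Or.inl (by omega)
    · have hδ : (3^m : ℤ) ∣ (-(3^s) : ℤ) := (pow3_dvd hsm).neg_right
      have hWdvd : (3^m : ℤ) ∣ (a*3^(s+1) + 2*3^s) := dvd_right_line hsm a
      have hKdvd : (3^m : ℤ) ∣ ((2*(b*3^(s+1) + 3^s) + 3^s - 1) + 1) := dvd_refl_const hsm b
      have hc'x : c'.1 - (-(3^s)) = a*3^(s+1) + 2*3^s - 1 := by omega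
      obtain ⟨Λ, hΛdvd, hΛinv, hΛuniq⟩ := axis_cross S.x hWdvd
      have hxdev : acell (atrans S.x (-(3^s)) hδ) c'.1
          = acell S.x (a*3^(s+1) + 2*3^s - 1) := by
        rw [acell_atrans, hc'x]
      have hxstep : XStep m (acell S.x c.1) (acell (atrans S.x (-(3^s)) hδ) c'.1) := by
        left
        rw [hxdev, acell_natAbs]
        omega
      -- range of the transverse coordinate of c
      have hcy1 : b*3^(s+1) + 3^s ≤ c.2 ∧ c.2 < b*3^(s+1) + 2*3^s := by
        by_cases hf : flipH (ι s a b) = true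
        · rw [if_pos hf] at h5; omega
        · rw [if_neg hf] at h5; omega
      have hyr1 : b*3^(s+1) + 3^s ≤ 3^m*(c.2/3^m) := line_le (dvd_left_line hsm b) hcy1.1
      have hyr2 : 3^m*(c.2/3^m) + 3^m ≤ b*3^(s+1) + 2*3^s :=
        lt_line (dvd_right_line hsm b) hcy1.2
      by_cases hf : flipH (ι s a b) = true
      · rw [if_pos hf] at h5
        refine ⟨⟨atrans S.x (-(3^s)) hδ, arefl S.y (2*(b*3^(s+1) + 3^s) + 3^s - 1) hKdvd⟩,
          hxstep, ?_, Or.inr ?_⟩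
        · left
          show (acell S.y c.2 - acell (arefl S.y (2*(b*3^(s+1) + 3^s) + 3^s - 1) hKdvd) c'.2).natAbs ≤ 1
          rw [acell_arefl, show 2*(b*3^(s+1) + 3^s) + 3^s - 1 - c'.2 = c.2 by omega,
            acell_natAbs]
          omega
        · intro P hP1 hP2 hP1' hP2'
          right
          rw [show (⟨atrans S.x (-(3^s)) hδ, arefl S.y (2*(b*3^(s+1) + 3^s) + 3^s - 1) hKdvd⟩ : DState m).x
              = atrans S.x (-(3^s)) hδ from rfl, hxdev] at hP1'
          rw [h2] at hP1
          have hPΛ : P.1 = Λ := hΛuniq P.1 hP1' hP1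
          have hYq := corner_pull S.y c.2 hP2
          unfold CornerLine at hYq
          refine ⟨s, a, b, hcell, Or.inl ⟨?_, ?_, ?_, ?_, ?_⟩⟩
          · show aptInv (atrans S.x (-(3^s)) hδ) P.1 = _
            rw [aptInv_atrans, hPΛ, hΛinv]
            ring
          · show aptInv S.x P.1 = _
            rw [hPΛ, hΛinv]
          · show b * 3 ^ (s + 1) + 3 ^ s ≤ aptInv (arefl S.y (2*(b*3^(s+1) + 3^s) + 3^s - 1) hKdvd) P.2
            rw [aptInv_arefl]
            rcases hYq with hYq | hYq <;> omega
          · show aptInv (arefl S.y (2*(b*3^(s+1) + 3^s) + 3^s - 1) hKdvd) P.2 ≤ b * 3 ^ (s + 1) + 2 * 3 ^ s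
            rw [aptInv_arefl]
            rcases hYq with hYq | hYq <;> omega
          · show aptInv S.y P.2 = _
            rw [if_pos hf, aptInv_arefl]
            ring
      · rw [if_neg hf] at h5
        refine ⟨⟨atrans S.x (-(3^s)) hδ, S.y⟩, hxstep, ?_, Or.inr ?_⟩
        · left
          show (acell S.y c.2 - acell S.y c'.2).natAbs ≤ 1
          rw [acell_natAbs]
          omega
        · intro P hP1 hP2 hP1' hP2'
          right
          rw [show (⟨atrans S.x (-(3^s)) hδ, S.y⟩ : DState m).x
              = atrans S.x (-(3^s)) hδ from rfl, hxdev] at hP1'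
          rw [h2] at hP1
          have hPΛ : P.1 = Λ := hΛuniq P.1 hP1' hP1
          have hYq := corner_pull S.y c.2 hP2
          unfold CornerLine at hYq
          refine ⟨s, a, b, hcell, Or.inl ⟨?_, ?_, ?_, ?_, ?_⟩⟩
          · show aptInv (atrans S.x (-(3^s)) hδ) P.1 = _
            rw [aptInv_atrans, hPΛ, hΛinv]
            ring
          · show aptInv S.x P.1 = _
            rw [hPΛ, hΛinv]
          · show b * 3 ^ (s + 1) + 3 ^ s ≤ aptInv S.y P.2
            rcases hYq with hYq | hYq <;> omega
          · show aptInv S.y P.2 ≤ b * 3 ^ (s + 1) + 2 * 3 ^ s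
            rcases hYq with hYq | hYq <;> omega
          · show aptInv S.y P.2 = _
            rw [if_neg hf]
  · -- HoleAdjV c c' (forward crossing, upwards)
    obtain ⟨s, a, b, hcell, h1, h2, h3, h4, h5⟩ := h
    have h3s : (3:ℤ)^(s+1) = 3*3^s := by ring
    have h3p : (0:ℤ) < 3^s := pow_pos (by norm_num) s
    rcases lt_or_ge s m with hsm | hsm
    · refine ⟨S, ?_, ?_, Or.inl rfl⟩
      · apply acell_xstep
        by_cases hf : flipV (ι s a b) = true
        · rw [if_pos hf] at h5
          exact Or.inr ⟨s, a, hsm, by omega, by omega, by omega, by omega⟩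
        · rw [if_neg hf] at h5
          exact Or.inl (by omega)
      · exact acell_xstep _ (Or.inr ⟨s, b, hsm, by omega, by omega, by omega, by omega⟩)
    · have hδ : (3^m : ℤ) ∣ (3^s : ℤ) := pow3_dvd hsm
      have hWdvd : (3^m : ℤ) ∣ (b*3^(s+1) + 3^s) := dvd_left_line hsm b
      have hKdvd : (3^m : ℤ) ∣ ((2*(a*3^(s+1) + 3^s) + 3^s - 1) + 1) := dvd_refl_const hsm a
      have hc'y : c'.2 - 3^s = b*3^(s+1) + 3^s := by omega
      obtain ⟨Λ, hΛdvd, hΛinv, hΛuniq⟩ := axis_cross S.y hWdvd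
      have hydev : acell (atrans S.y (3^s) hδ) c'.2 = acell S.y (b*3^(s+1) + 3^s) := by
        rw [acell_atrans, hc'y]
      have hystep : XStep m (acell S.y c.2) (acell (atrans S.y (3^s) hδ) c'.2) := by
        left
        rw [hydev, acell_natAbs]
        omega
      have hxr1 : a*3^(s+1) + 3^s ≤ 3^m*(c.1/3^m) := line_le (dvd_left_line hsm a) h3
      have hxr2 : 3^m*(c.1/3^m) + 3^m ≤ a*3^(s+1) + 2*3^s := lt_line (dvd_right_line hsm a) h4
      by_cases hf : flipV (ι s a b) = true
      · rw [if_pos hf] at h5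
        refine ⟨⟨arefl S.x (2*(a*3^(s+1) + 3^s) + 3^s - 1) hKdvd, atrans S.y (3^s) hδ⟩,
          ?_, hystep, Or.inr ?_⟩
        · left
          show (acell S.x c.1 - acell (arefl S.x (2*(a*3^(s+1) + 3^s) + 3^s - 1) hKdvd) c'.1).natAbs ≤ 1
          rw [acell_arefl, show 2*(a*3^(s+1) + 3^s) + 3^s - 1 - c'.1 = c.1 by omega,
            acell_natAbs]
          omega
        · intro P hP1 hP2 hP1' hP2'
          left
          rw [show (⟨arefl S.x (2*(a*3^(s+1) + 3^s) + 3^s - 1) hKdvd, atrans S.y (3^s) hδ⟩ : DState m).y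
              = atrans S.y (3^s) hδ from rfl, hydev] at hP2'
          rw [h1] at hP2
          have hPΛ : P.2 = Λ := hΛuniq P.2 hP2 hP2'
          have hXq := corner_pull S.x c.1 hP1
          unfold CornerLine at hXq
          refine ⟨s, a, b, hcell, Or.inr ⟨?_, ?_, ?_, ?_, ?_⟩⟩
          · show aptInv S.y P.2 = _
            rw [hPΛ, hΛinv]
          · show aptInv (atrans S.y (3^s) hδ) P.2 = _
            rw [aptInv_atrans, hPΛ, hΛinv]
            ring
          · show a * 3 ^ (s + 1) + 3 ^ s ≤ aptInv S.x P.1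
            rcases hXq with hXq | hXq <;> omega
          · show aptInv S.x P.1 ≤ a * 3 ^ (s + 1) + 2 * 3 ^ s
            rcases hXq with hXq | hXq <;> omega
          · show aptInv (arefl S.x (2*(a*3^(s+1) + 3^s) + 3^s - 1) hKdvd) P.1 = _
            rw [if_pos hf, aptInv_arefl]
            ring
      · rw [if_neg hf] at h5
        refine ⟨⟨S.x, atrans S.y (3^s) hδ⟩, ?_, hystep, Or.inr ?_⟩
        · left
          show (acell S.x c.1 - acell S.x c'.1).natAbs ≤ 1
          rw [acell_natAbs]
          omega
        · intro P hP1 hP2 hP1' hP2'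
          left
          rw [show (⟨S.x, atrans S.y (3^s) hδ⟩ : DState m).y = atrans S.y (3^s) hδ from rfl,
            hydev] at hP2'
          rw [h1] at hP2
          have hPΛ : P.2 = Λ := hΛuniq P.2 hP2 hP2'
          have hXq := corner_pull S.x c.1 hP1
          unfold CornerLine at hXq
          refine ⟨s, a, b, hcell, Or.inr ⟨?_, ?_, ?_, ?_, ?_⟩⟩
          · show aptInv S.y P.2 = _
            rw [hPΛ, hΛinv]
          · show aptInv (atrans S.y (3^s) hδ) P.2 = _
            rw [aptInv_atrans, hPΛ, hΛinv]
            ring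
          · show a * 3 ^ (s + 1) + 3 ^ s ≤ aptInv S.x P.1
            rcases hXq with hXq | hXq <;> omega
          · show aptInv S.x P.1 ≤ a * 3 ^ (s + 1) + 2 * 3 ^ s
            rcases hXq with hXq | hXq <;> omega
          · show aptInv S.x P.1 = _
            rw [if_neg hf]
  · -- HoleAdjV c' c (backward crossing, downwards)
    obtain ⟨s, a, b, hcell, h1, h2, h3, h4, h5⟩ := h
    have h3s : (3:ℤ)^(s+1) = 3*3^s := by ring
    have h3p : (0:ℤ) < 3^s := pow_pos (by norm_num) s
    rcases lt_or_ge s m with hsm | hsm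
    · refine ⟨S, ?_, ?_, Or.inl rfl⟩
      · apply acell_xstep
        by_cases hf : flipV (ι s a b) = true
        · rw [if_pos hf] at h5
          exact Or.inr ⟨s, a, hsm, by omega, by omega, by omega, by omega⟩
        · rw [if_neg hf] at h5
          exact Or.inl (by omega)
      · exact acell_xstep _ (Or.inr ⟨s, b, hsm, by omega, by omega, by omega, by omega⟩)
    · have hδ : (3^m : ℤ) ∣ (-(3^s) : ℤ) := (pow3_dvd hsm).neg_right
      have hWdvd : (3^m : ℤ) ∣ (b*3^(s+1) + 2*3^s) := dvd_right_line hsm b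
      have hKdvd : (3^m : ℤ) ∣ ((2*(a*3^(s+1) + 3^s) + 3^s - 1) + 1) := dvd_refl_const hsm a
      have hc'y : c'.2 - (-(3^s)) = b*3^(s+1) + 2*3^s - 1 := by omega
      obtain ⟨Λ, hΛdvd, hΛinv, hΛuniq⟩ := axis_cross S.y hWdvd
      have hydev : acell (atrans S.y (-(3^s)) hδ) c'.2
          = acell S.y (b*3^(s+1) + 2*3^s - 1) := by
        rw [acell_atrans, hc'y]
      have hystep : XStep m (acell S.y c.2) (acell (atrans S.y (-(3^s)) hδ) c'.2) := by
        left
        rw [hydev, acell_natAbs]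
        omega
      have hcx1 : a*3^(s+1) + 3^s ≤ c.1 ∧ c.1 < a*3^(s+1) + 2*3^s := by
        by_cases hf : flipV (ι s a b) = true
        · rw [if_pos hf] at h5; omega
        · rw [if_neg hf] at h5; omega
      have hxr1 : a*3^(s+1) + 3^s ≤ 3^m*(c.1/3^m) := line_le (dvd_left_line hsm a) hcx1.1
      have hxr2 : 3^m*(c.1/3^m) + 3^m ≤ a*3^(s+1) + 2*3^s :=
        lt_line (dvd_right_line hsm a) hcx1.2
      by_cases hf : flipV (ι s a b) = true
      · rw [if_pos hf] at h5
        refine ⟨⟨arefl S.x (2*(a*3^(s+1) + 3^s) + 3^s - 1) hKdvd, atrans S.y (-(3^s)) hδ⟩,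
          ?_, hystep, Or.inr ?_⟩
        · left
          show (acell S.x c.1 - acell (arefl S.x (2*(a*3^(s+1) + 3^s) + 3^s - 1) hKdvd) c'.1).natAbs ≤ 1
          rw [acell_arefl, show 2*(a*3^(s+1) + 3^s) + 3^s - 1 - c'.1 = c.1 by omega,
            acell_natAbs]
          omega
        · intro P hP1 hP2 hP1' hP2'
          right
          rw [show (⟨arefl S.x (2*(a*3^(s+1) + 3^s) + 3^s - 1) hKdvd, atrans S.y (-(3^s)) hδ⟩ : DState m).y
              = atrans S.y (-(3^s)) hδ from rfl, hydev] at hP2'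
          rw [h2] at hP2
          have hPΛ : P.2 = Λ := hΛuniq P.2 hP2' hP2
          have hXq := corner_pull S.x c.1 hP1
          unfold CornerLine at hXq
          refine ⟨s, a, b, hcell, Or.inr ⟨?_, ?_, ?_, ?_, ?_⟩⟩
          · show aptInv (atrans S.y (-(3^s)) hδ) P.2 = _
            rw [aptInv_atrans, hPΛ, hΛinv]
            ring
          · show aptInv S.y P.2 = _
            rw [hPΛ, hΛinv]
          · show a * 3 ^ (s + 1) + 3 ^ s ≤ aptInv (arefl S.x (2*(a*3^(s+1) + 3^s) + 3^s - 1) hKdvd) P.1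
            rw [aptInv_arefl]
            rcases hXq with hXq | hXq <;> omega
          · show aptInv (arefl S.x (2*(a*3^(s+1) + 3^s) + 3^s - 1) hKdvd) P.1 ≤ a * 3 ^ (s + 1) + 2 * 3 ^ s
            rw [aptInv_arefl]
            rcases hXq with hXq | hXq <;> omega
          · show aptInv S.x P.1 = _
            rw [if_pos hf, aptInv_arefl]
            ring
      · rw [if_neg hf] at h5
        refine ⟨⟨S.x, atrans S.y (-(3^s)) hδ⟩, ?_, hystep, Or.inr ?_⟩
        · left
          show (acell S.x c.1 - acell S.x c'.1).natAbs ≤ 1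
          rw [acell_natAbs]
          omega
        · intro P hP1 hP2 hP1' hP2'
          right
          rw [show (⟨S.x, atrans S.y (-(3^s)) hδ⟩ : DState m).y
              = atrans S.y (-(3^s)) hδ from rfl, hydev] at hP2'
          rw [h2] at hP2
          have hPΛ : P.2 = Λ := hΛuniq P.2 hP2' hP2
          have hXq := corner_pull S.x c.1 hP1
          unfold CornerLine at hXq
          refine ⟨s, a, b, hcell, Or.inr ⟨?_, ?_, ?_, ?_, ?_⟩⟩
          · show aptInv (atrans S.y (-(3^s)) hδ) P.2 = _
            rw [aptInv_atrans, hPΛ, hΛinv]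
            ring
          · show aptInv S.y P.2 = _
            rw [hPΛ, hΛinv]
          · show a * 3 ^ (s + 1) + 3 ^ s ≤ aptInv S.x P.1
            rcases hXq with hXq | hXq <;> omega
          · show aptInv S.x P.1 ≤ a * 3 ^ (s + 1) + 2 * 3 ^ s
            rcases hXq with hXq | hXq <;> omega
          · show aptInv S.x P.1 = _
            rw [if_neg hf]

end StepExists


/-! ### Assembly -/

lemma int_ediv_div (a b : ℤ) : Int.ediv a b = a / b := rfl

lemma corner_between {X0 u : ℤ} (k : ℤ) (hd : X0 = 3^m*k)
    (h1 : X0 - 3^m ≤ u) (h2 : u < X0 + 3^m) : CornerLine m u X0 := by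
  have h3 : (0:ℤ) < 3^m := pow_pos (by norm_num) m
  rcases le_or_gt X0 u with h | h
  · left
    have : u / 3^m = k := int_ediv_eq h3 (r := u - X0) (by omega) (by omega) (by omega)
    rw [this, ← hd]
  · right
    have : u / 3^m = k - 1 := by
      apply int_ediv_eq h3 (r := u - X0 + 3^m) _ (by omega) (by omega)
      have : (3:ℤ)^m*(k-1) = 3^m*k - 3^m := by ring
      omega
    rw [this]
    have : (3:ℤ)^m*(k-1) = 3^m*k - 3^m := by ring
    omega

lemma destutter'_headq {α : Type*} (R : α → α → Prop) [DecidableRel R] (a : α) (l : List α) :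
    (List.destutter' R a l)[0]? = some a := by
  induction l generalizing a with
  | nil => rfl
  | cons b l ih =>
    rw [List.destutter'_cons]
    by_cases h : R a b
    · rw [if_pos h]; simp
    · rw [if_neg h]; exact ih a

lemma states_exist (ι : IdentAssignment) (m : ℕ) {T : ℕ} (cs : ℕ → ℤ × ℤ)
    (hadj : ∀ i, i < T → IMCAdj ι (cs i) (cs (i+1))) :
    ∃ S : ℕ → DState m, S 0 = ⟨aid m, aid m⟩ ∧
      ∀ i, i < T → StepP ι m (S i) (S (i+1)) (cs i) (cs (i+1)) := by
  induction T with
  | zero => exact ⟨fun _ => ⟨aid m, aid m⟩, rfl, by omega⟩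
  | succ T ih =>
    obtain ⟨S, hS0, hSstep⟩ := ih (fun i hi => hadj i (by omega))
    obtain ⟨S', hS'⟩ := step_exists (ι := ι) (S T) (hadj T (by omega))
    refine ⟨fun j => if j ≤ T then S j else S', ?_, ?_⟩
    · dsimp only
      rw [if_pos (Nat.zero_le T), hS0]
    · intro i hi
      dsimp only
      by_cases h1 : i < T
      · rw [if_pos (by omega : i ≤ T), if_pos (by omega : i + 1 ≤ T)]
        exact hSstep i h1
      · have hiT : i = T := by omega
        subst hiT
        rw [if_pos (le_refl i), if_neg (by omega : ¬ i + 1 ≤ i)]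
        exact hS'

/-- A cell used as a default value. -/
lemma dig_zero (k : ℕ) : dig k 0 = 0 := by
  unfold dig
  rw [show Int.ediv (0:ℤ) (3^k) = (0:ℤ)/(3^k) from rfl, Int.zero_ediv,
    show Int.emod (0:ℤ) 3 = (0:ℤ)%3 from rfl, Int.zero_emod]

/-- A cell used as a default value. -/
def cellO : Cell := ⟨(0,0), by
  intro k h
  obtain ⟨h1, -⟩ := h
  simp [dig_zero] at h1⟩

/-- The main transport lemma: every cell on a short walk lies in a copy having a corner
point equivalent to a fixed corner point of the starting copy. -/
theorem corner_transport (ι : IdentAssignment) (m : ℕ) {x y : Cell}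
    (w : (IMC ι).Walk x y) (hlen : w.length ≤ 2^m) :
    ∃ p : ℤ × ℤ, IsCornerPt m (copyOf m x) p ∧
      ∀ c ∈ w.support, ∃ q, IsCornerPt m (copyOf m c) q ∧ PtEquiv ι p q := by
  classical
  have h3 : (0:ℤ) < 3^m := pow_pos (by norm_num) m
  set T := w.length with hT
  have hsupl : w.support.length = T + 1 := w.length_support
  set c : ℕ → Cell := fun i => w.support.getD i cellO with hc
  have hc0 : c 0 = x := by
    show w.support.getD 0 cellO = x
    rw [w.support_eq_cons]
    rfl
  have hcget : ∀ i (h : i < T + 1), c i = w.support.get ⟨i, by omega⟩ := by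
    intro i h
    rw [hc]
    exact List.getD_eq_get (l := w.support) (d := cellO) (i := ⟨i, by omega⟩)
  have hadj : ∀ i, i < T → IMCAdj ι (c i).val (c (i+1)).val := by
    intro i hi
    have hch := List.isChain_iff_getElem.mp w.isChain_adj_support i (by omega)
    rw [hcget i (by omega), hcget (i+1) (by omega)]
    exact hch
  obtain ⟨S, hS0, hSstep⟩ := states_exist ι m (fun i => (c i).val)
    (fun i hi => hadj i hi)
  -- developed coordinates
  set zx : ℕ → ℤ := fun i => acell (S i).x (c i).val.1 with hzx
  set zy : ℕ → ℤ := fun i => acell (S i).y (c i).val.2 with hzy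
  have hstepx : ∀ t, t < T → XStep m (zx t) (zx (t+1)) := fun t ht => (hSstep t ht).1
  have hstepy : ∀ t, t < T → XStep m (zy t) (zy (t+1)) := fun t ht => (hSstep t ht).2.1
  -- common corner lines of the developed walk
  have hX : ∃ Xs : ℤ, ∀ t ≤ T, CornerLine m (zx t) Xs := by
    rcases oneD hstepx hlen (X0 := 3^m * (zx 0 / 3^m)) rfl with hcase | hcase
    · exact ⟨3^m * (zx 0 / 3^m), fun t ht =>
        corner_between (zx 0 / 3^m) rfl (hcase t ht).1 (hcase t ht).2⟩
    · refine ⟨3^m * (zx 0 / 3^m) + 3^m, fun t ht => ?_⟩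
      refine corner_between (zx 0 / 3^m + 1) (by ring) ?_ ?_
      · have := (hcase t ht).1; omega
      · have := (hcase t ht).2; omega
  have hY : ∃ Ys : ℤ, ∀ t ≤ T, CornerLine m (zy t) Ys := by
    rcases oneD hstepy hlen (X0 := 3^m * (zy 0 / 3^m)) rfl with hcase | hcase
    · exact ⟨3^m * (zy 0 / 3^m), fun t ht =>
        corner_between (zy 0 / 3^m) rfl (hcase t ht).1 (hcase t ht).2⟩
    · refine ⟨3^m * (zy 0 / 3^m) + 3^m, fun t ht => ?_⟩
      refine corner_between (zy 0 / 3^m + 1) (by ring) ?_ ?_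
      · have := (hcase t ht).1; omega
      · have := (hcase t ht).2; omega
  obtain ⟨Xs, hXs⟩ := hX
  obtain ⟨Ys, hYs⟩ := hY
  -- actual corner points
  obtain ⟨q, hqv⟩ : ∃ q : ℕ → ℤ × ℤ,
      ∀ i, q i = (aptInv (S i).x Xs, aptInv (S i).y Ys) := ⟨_, fun _ => rfl⟩
  have hq0 : q 0 = (Xs, Ys) := by
    rw [hqv 0, hS0]
    simp [aid, aptInv]
  have hcorner : ∀ i, i ≤ T → IsCornerPt m (copyOf m (c i)) (q i) := by
    intro i hi
    have hx := corner_pull (S i).x ((c i).val.1) (hXs i hi)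
    have hy := corner_pull (S i).y ((c i).val.2) (hYs i hi)
    unfold CornerLine at hx hy
    constructor
    · show (q i).1 = (copyOf m (c i)).1 * 3^m ∨ (q i).1 = ((copyOf m (c i)).1 + 1) * 3^m
      unfold copyOf
      simp only [int_ediv_div]
      simp only [hqv]
      rcases hx with hx | hx
      · left; rw [hx]; ring
      · right; rw [hx]; ring
    · show (q i).2 = (copyOf m (c i)).2 * 3^m ∨ (q i).2 = ((copyOf m (c i)).2 + 1) * 3^m
      unfold copyOf
      simp only [int_ediv_div]
      simp only [hqv]
      rcases hy with hy | hy
      · left; rw [hy]; ring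
      · right; rw [hy]; ring
  have htrans : ∀ i, i < T → PtEquiv ι (q i) (q (i+1)) := by
    intro i hi
    rcases (hSstep i hi).2.2 with heq | hglue
    · rw [hqv i, hqv (i+1), heq]
      exact Relation.EqvGen.refl _
    · have := hglue (Xs, Ys) (hXs i (by omega)) (hYs i (by omega))
        (hXs (i+1) (by omega)) (hYs (i+1) (by omega))
      rw [hqv i, hqv (i+1)]
      exact Relation.EqvGen.rel _ _ this
  have hchain : ∀ i, i ≤ T → PtEquiv ι (q 0) (q i) := by
    intro i
    induction i with
    | zero => intro _; exact Relation.EqvGen.refl _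
    | succ i ih =>
      intro hi
      exact Relation.EqvGen.trans _ _ _ (ih (by omega)) (htrans i (by omega))
  refine ⟨q 0, ?_, ?_⟩
  · have := hcorner 0 (Nat.zero_le _)
    rwa [hc0] at this
  · intro cc hcc
    obtain ⟨⟨i, hi⟩, hgi⟩ := List.mem_iff_get.mp hcc
    rw [hsupl] at hi
    have hci : c i = cc := by rw [hcget i hi]; rw [← hgi]
    refine ⟨q i, ?_, hchain i (by omega)⟩
    rw [← hci]
    exact hcorner i (by omega)

/-- For any identification type and a path of length at most `2^m`, if `U`
is the first copy of `V_m` in its `m`-sequence, then there is a corner vertex of `U`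
shared (after identification) by every copy of `V_m` appearing in the `m`-sequence. -/
theorem common_corner_vertex (t : IdentType) (m : ℕ) {x y : Cell}
    (w : (IMC (uniform t)).Walk x y) (hlen : w.length ≤ 2 ^ m)
    (U : ℤ × ℤ) (hU : (mSeq (uniform t) m w)[0]? = some U) :
    ∃ p : ℤ × ℤ, IsCornerPt m U p ∧
      ∀ C ∈ mSeq (uniform t) m w, ∃ q : ℤ × ℤ, IsCornerPt m C q ∧ PtEquiv (uniform t) p q := by
  classical
  obtain ⟨p, hp, hall⟩ := corner_transport (uniform t) m w hlen
  have hU' : U = copyOf m x := by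
    unfold mSeq at hU
    rw [w.support_eq_cons, List.map_cons, List.destutter_cons', destutter'_headq] at hU
    injection hU with h
    exact h.symm
  refine ⟨p, by rw [hU']; exact hp, ?_⟩
  intro C hC
  have hmem : C ∈ w.support.map (copyOf m) := (List.destutter_sublist _ _).subset hC
  obtain ⟨cc, hccmem, hccC⟩ := List.mem_map.mp hmem
  obtain ⟨q, hq1, hq2⟩ := hall cc hccmem
  exact ⟨q, by rw [← hccC]; exact hq1, hq2⟩

end MagicCarpet
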